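/- arXiv:1808.04540 — 6 statements merged into one kernel-verified Lean document; each statement's English description precedes it below -/
import Mathlib

section
/- Let G be a connected graph and T a connected subgraph of G. If v_1, ..., v_m are vertices of T that are cut-vertices of G but are not cut-vertices of T, then there exist vertices v_1', ..., v_m' in V(G) \ V(T) forming an independent set in G such that for each i, the neighborhood of v_i' in G intersected with V(T) is exactly {v_i}. -/
open SimpleGraph Finset

/-- An independent set: pairwise non-adjacent vertices. -/
def IsIndepSet {V : Type*} (G : SimpleGraph V) (s : Set V) : Prop :=
  s.Pairwise fun a b => ¬ G.Adj a b

/-- `v` is a cut-vertex of `G`: deleting `v` increases the number of connected components. -/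
def IsCutVertex {V : Type*} (G : SimpleGraph V) (v : V) : Prop :=
  Nat.card G.ConnectedComponent < Nat.card (G.induce {v}ᶜ).ConnectedComponent

/-- `G` contains an induced subgraph isomorphic to `H`. -/
def HasInducedCopy {V W : Type*} (G : SimpleGraph V) (H : SimpleGraph W) : Prop :=
  ∃ s : Set V, Nonempty (H ≃g G.induce s)

/-- `H_n^1`: the complete graph on `Fin n` (the `Sum.inl` part) with a pendant vertex
(`Sum.inr i`) attached to each clique vertex `Sum.inl i`. -/
def Hgraph1 (n : ℕ) : SimpleGraph (Fin n ⊕ Fin n) :=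
  SimpleGraph.fromRel (fun a b => match a, b with
    | Sum.inl _, Sum.inl _ => True
    | Sum.inl i, Sum.inr j => i = j
    | _, _ => False)

/-- `H_n^2`: the complete graph on `Fin n` with a path of length 2 attached to each
clique vertex: `Sum.inl i` — `Sum.inr (Sum.inl i)` — `Sum.inr (Sum.inr i)`. -/
def Hgraph2 (n : ℕ) : SimpleGraph (Fin n ⊕ (Fin n ⊕ Fin n)) :=
  SimpleGraph.fromRel (fun a b => match a, b with
    | Sum.inl _, Sum.inl _ => True
    | Sum.inl i, Sum.inr (Sum.inl j) => i = j
    | Sum.inr (Sum.inl i), Sum.inr (Sum.inr j) => i = j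
    | _, _ => False)

/-- `T_n`: the complete graph on `Fin n` with a triangle attached at each clique vertex. -/
def Tgraph (n : ℕ) : SimpleGraph (Fin n ⊕ (Fin n ⊕ Fin n)) :=
  SimpleGraph.fromRel (fun a b => match a, b with
    | Sum.inl _, Sum.inl _ => True
    | Sum.inl i, Sum.inr (Sum.inl j) => i = j
    | Sum.inl i, Sum.inr (Sum.inr j) => i = j
    | Sum.inr (Sum.inl i), Sum.inr (Sum.inr j) => i = j
    | _, _ => False)

/-- `S_n^2`: the spider with `n` legs of length 2 (center `Sum.inl ()`). -/
def Sgraph2 (n : ℕ) : SimpleGraph (Unit ⊕ (Fin n ⊕ Fin n)) :=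
  SimpleGraph.fromRel (fun a b => match a, b with
    | Sum.inl _, Sum.inr (Sum.inl _) => True
    | Sum.inr (Sum.inl i), Sum.inr (Sum.inr j) => i = j
    | _, _ => False)

/-- `F_n`: `n` triangles sharing exactly one common vertex (the center `Sum.inl ()`). -/
def Fgraph (n : ℕ) : SimpleGraph (Unit ⊕ (Fin n ⊕ Fin n)) :=
  SimpleGraph.fromRel (fun a b => match a, b with
    | Sum.inl _, Sum.inr _ => True
    | Sum.inr (Sum.inl i), Sum.inr (Sum.inr j) => i = j
    | _, _ => False)

/-- The matching number of `G`. -/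
noncomputable def matchNum {V : Type*} (G : SimpleGraph V) : ℕ :=
  sSup {k | ∃ M : G.Subgraph, M.IsMatching ∧ M.edgeSet.ncard = k}

/-- The vertex cover number of `G`. -/
noncomputable def coverNum {V : Type*} (G : SimpleGraph V) : ℕ :=
  sInf {k | ∃ s : Set V, (∀ ⦃u w⦄, G.Adj u w → u ∈ s ∨ w ∈ s) ∧ s.ncard = k}


private lemma conn_card_one {W : Type*} {H : SimpleGraph W} (h : H.Connected) :
    Nat.card H.ConnectedComponent = 1 := by
  have hs : Subsingleton H.ConnectedComponent := by
    constructor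
    intro a b
    obtain ⟨x, rfl⟩ := a.exists_rep
    obtain ⟨y, rfl⟩ := b.exists_rep
    exact ConnectedComponent.eq.mpr (h.preconnected x y)
  have hn : Nonempty H.ConnectedComponent :=
    Nonempty.map H.connectedComponentMk h.nonempty
  exact Nat.card_eq_one_iff_unique.mpr ⟨hs, hn⟩

private lemma reach_induce_of_walk {V : Type*} {G : SimpleGraph V} {s : Set V} {a b : V}
    (p : G.Walk a b) (hp : ∀ x ∈ p.support, x ∈ s) :
    ∀ (ha : a ∈ s) (hb : b ∈ s), (G.induce s).Reachable ⟨a, ha⟩ ⟨b, hb⟩ := by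
  induction p with
  | nil => intro _ _; exact Reachable.refl _
  | @cons a c b h q ih =>
    intro ha hb
    have hc : c ∈ s := hp c (by simp)
    have hadj : (G.induce s).Adj ⟨a, ha⟩ ⟨c, hc⟩ := h
    exact hadj.reachable.trans (ih (fun x hx => hp x (by simp [hx])) hc hb)

private lemma exists_adj_reach {V : Type*} {G : SimpleGraph V} {v w : V}
    (p : G.Walk w v) :
    ∀ (hw : w ∈ ({v}ᶜ : Set V)),
      ∃ u, ∃ hu : u ∈ ({v}ᶜ : Set V), G.Adj u v ∧
        (G.induce ({v}ᶜ : Set V)).Reachable ⟨w, hw⟩ ⟨u, hu⟩ := by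
  induction p with
  | nil =>
    intro hw
    exact absurd rfl (Set.mem_compl_singleton_iff.mp hw)
  | @cons a c b h q ih =>
    intro hw
    by_cases hc : c = b
    · subst hc
      exact ⟨a, hw, h, Reachable.refl _⟩
    · have hc' : c ∈ ({b}ᶜ : Set V) := Set.mem_compl_singleton_iff.mpr hc
      obtain ⟨u, hu, hadj, hr⟩ := ih hc'
      have hadj' : (G.induce ({b}ᶜ : Set V)).Adj ⟨a, hw⟩ ⟨c, hc'⟩ := h
      exact ⟨u, hu, hadj, hadj'.reachable.trans hr⟩

private lemma key {V : Type*} [Fintype V] {G : SimpleGraph V} (hG : G.Connected)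
    {T : G.Subgraph} (hT : T.Connected) {w : V} (hwT : w ∈ T.verts)
    (hcG : IsCutVertex G w) (hcT : ¬ IsCutVertex T.coe ⟨w, hwT⟩) :
    ∃ u, G.Adj u w ∧ ∀ x, x ∈ T.verts → ∀ (hu : u ∈ ({w}ᶜ : Set V))
      (hx : x ∈ ({w}ᶜ : Set V)),
        ¬ (G.induce ({w}ᶜ : Set V)).Reachable ⟨u, hu⟩ ⟨x, hx⟩ := by
  classical
  -- T minus w has subsingleton components
  have hsub : Subsingleton
      (T.coe.induce ({(⟨w, hwT⟩ : T.verts)}ᶜ : Set T.verts)).ConnectedComponent := by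
    have h1 : Nat.card T.coe.ConnectedComponent = 1 := conn_card_one hT.coe
    simp only [IsCutVertex, not_lt, h1] at hcT
    exact Finite.card_le_one_iff_subsingleton.mp hcT
  -- all of T minus w sits in one component of G minus w
  have hTreach : ∀ x y (hx : x ∈ T.verts) (hy : y ∈ T.verts)
      (hxw : x ∈ ({w}ᶜ : Set V)) (hyw : y ∈ ({w}ᶜ : Set V)),
      (G.induce ({w}ᶜ : Set V)).Reachable ⟨x, hxw⟩ ⟨y, hyw⟩ := by
    intro x y hx hy hxw hyw
    have hx' : (⟨x, hx⟩ : T.verts) ∈ ({(⟨w, hwT⟩ : T.verts)}ᶜ : Set T.verts) :=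
      fun h => (Set.mem_compl_singleton_iff.mp hxw) (congrArg Subtype.val h)
    have hy' : (⟨y, hy⟩ : T.verts) ∈ ({(⟨w, hwT⟩ : T.verts)}ᶜ : Set T.verts) :=
      fun h => (Set.mem_compl_singleton_iff.mp hyw) (congrArg Subtype.val h)
    have hr : (T.coe.induce ({(⟨w, hwT⟩ : T.verts)}ᶜ : Set T.verts)).Reachable
        ⟨⟨x, hx⟩, hx'⟩ ⟨⟨y, hy⟩, hy'⟩ :=
      ConnectedComponent.eq.mp (Subsingleton.elim _ _)
    let f : (T.coe.induce ({(⟨w, hwT⟩ : T.verts)}ᶜ : Set T.verts)) →g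
        G.induce ({w}ᶜ : Set V) :=
      { toFun := fun z => ⟨z.1.1, fun h => z.2 (Subtype.ext h)⟩
        map_rel' := fun hab => T.adj_sub hab }
    exact hr.map f
  -- G minus w has at least two components
  have hcard1 : Nat.card G.ConnectedComponent = 1 := conn_card_one hG
  have hnt : Nontrivial (G.induce ({w}ᶜ : Set V)).ConnectedComponent := by
    have h2 := hcG
    rw [IsCutVertex, hcard1] at h2
    exact Finite.one_lt_card_iff_nontrivial.mp h2
  obtain ⟨c₁, c₂, hc12⟩ := hnt
  -- choose a component avoiding T
  have hexc : ∃ c : (G.induce ({w}ᶜ : Set V)).ConnectedComponent,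
      ∀ x (hxw : x ∈ ({w}ᶜ : Set V)), x ∈ T.verts →
        (G.induce ({w}ᶜ : Set V)).connectedComponentMk ⟨x, hxw⟩ ≠ c := by
    by_cases hex : ∃ t, t ∈ T.verts ∧ t ∈ ({w}ᶜ : Set V)
    · obtain ⟨t, htT, htw⟩ := hex
      have hall : ∀ x (hxw : x ∈ ({w}ᶜ : Set V)), x ∈ T.verts →
          (G.induce ({w}ᶜ : Set V)).connectedComponentMk ⟨x, hxw⟩ =
          (G.induce ({w}ᶜ : Set V)).connectedComponentMk ⟨t, htw⟩ :=
        fun x hxw hxT => ConnectedComponent.eq.mpr (hTreach x t hxT htT hxw htw)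
      by_cases h1 : c₁ = (G.induce ({w}ᶜ : Set V)).connectedComponentMk ⟨t, htw⟩
      · refine ⟨c₂, fun x hxw hxT h => hc12 ?_⟩
        rw [h1, ← hall x hxw hxT, h]
      · exact ⟨c₁, fun x hxw hxT h => h1 ((hall x hxw hxT).symm.trans h).symm⟩
    · exact ⟨c₁, fun x hxw hxT _ => hex ⟨x, hxT, hxw⟩⟩
  obtain ⟨c, hc⟩ := hexc
  obtain ⟨z, hz⟩ := c.exists_rep
  obtain ⟨p⟩ : G.Reachable z.1 w := hG.preconnected _ _
  obtain ⟨u, hu, hadjuw, hru⟩ := exists_adj_reach p z.2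
  refine ⟨u, hadjuw, ?_⟩
  intro x hxT hu' hx' hr
  apply hc x hx' hxT
  have e1 : (G.induce ({w}ᶜ : Set V)).connectedComponentMk ⟨u, hu⟩ = c :=
    (ConnectedComponent.eq.mpr hru).symm.trans hz
  exact (ConnectedComponent.eq.mpr hr.symm).trans e1

theorem stmt0 {V : Type*} [Fintype V] (G : SimpleGraph V) (hG : G.Connected)
    (T : G.Subgraph) (hT : T.Connected) (m : ℕ) (v : Fin m → V)
    (hinj : Function.Injective v) (hvT : ∀ i, v i ∈ T.verts)
    (hcutG : ∀ i, IsCutVertex G (v i))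
    (hcutT : ∀ i, ¬ IsCutVertex T.coe ⟨v i, hvT i⟩) :
    ∃ v' : Fin m → V, Function.Injective v' ∧ (∀ i, v' i ∉ T.verts) ∧
      _root_.IsIndepSet G (Set.range v') ∧
      (∀ i, G.neighborSet (v' i) ∩ T.verts = {v i}) := by
  classical
  have key' : ∀ i, ∃ u, G.Adj u (v i) ∧ ∀ x, x ∈ T.verts →
      ∀ (hu : u ∈ ({v i}ᶜ : Set V)) (hx : x ∈ ({v i}ᶜ : Set V)),
        ¬ (G.induce ({v i}ᶜ : Set V)).Reachable ⟨u, hu⟩ ⟨x, hx⟩ :=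
    fun i => key hG hT (hvT i) (hcutG i) (hcutT i)
  choose u hadj hkey using key'
  have hune : ∀ i, u i ∈ ({v i}ᶜ : Set V) :=
    fun i => Set.mem_compl_singleton_iff.mpr (hadj i).ne
  have hnotT : ∀ i, u i ∉ T.verts := by
    intro i hiT
    exact hkey i (u i) hiT (hune i) (hune i) (Reachable.refl _)
  have hnb : ∀ i x, x ∈ T.verts → G.Adj (u i) x → x = v i := by
    intro i x hxT hx
    by_contra hne
    have hne' : x ∈ ({v i}ᶜ : Set V) := Set.mem_compl_singleton_iff.mpr hne
    have hadj' : (G.induce ({v i}ᶜ : Set V)).Adj ⟨u i, hune i⟩ ⟨x, hne'⟩ := hx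
    exact hkey i x hxT (hune i) hne' hadj'.reachable
  refine ⟨u, ?_, hnotT, ?_, ?_⟩
  · intro i j hij
    have h1 : G.Adj (u i) (v j) := by rw [hij]; exact hadj j
    exact (hinj (hnb i (v j) (hvT j) h1)).symm
  · rintro _ ⟨i, rfl⟩ _ ⟨j, rfl⟩ hne hadjij
    have hij : i ≠ j := fun h => hne (by rw [h])
    have h1 : u j ∈ ({v i}ᶜ : Set V) :=
      Set.mem_compl_singleton_iff.mpr (fun h => hnotT j (h ▸ hvT i))
    have h2 : v j ∈ ({v i}ᶜ : Set V) :=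
      Set.mem_compl_singleton_iff.mpr (fun h => hij (hinj h.symm))
    have r1 : (G.induce ({v i}ᶜ : Set V)).Adj ⟨u i, hune i⟩ ⟨u j, h1⟩ := hadjij
    have r2 : (G.induce ({v i}ᶜ : Set V)).Adj ⟨u j, h1⟩ ⟨v j, h2⟩ := hadj j
    exact hkey i (v j) (hvT j) (hune i) h2 (r1.reachable.trans r2.reachable)
  · intro i
    ext x
    simp only [Set.mem_inter_iff, mem_neighborSet, Set.mem_singleton_iff]
    constructor
    · rintro ⟨hxadj, hxT⟩
      exact hnb i x hxT hxadj
    · rintro rfl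
      exact ⟨hadj i, hvT i⟩
end

section
/- For every positive integer n there exists an integer N such that every connected graph on at least N vertices contains an induced subgraph isomorphic to the path P_n, the complete graph K_n, or the star K_{1,n}. -/
open SimpleGraph Finset

section Helpers
open Function

lemma dist_getVert_le {V : Type*} {G : SimpleGraph V} (hc : G.Connected) {u v : V}
    (p : G.Walk u v) (i : ℕ) :
    G.dist u (p.getVert i) ≤ i := by
  induction p generalizing i with
  | nil => simp [SimpleGraph.Walk.getVert, SimpleGraph.dist_self]
  | @cons a b c h q ih =>
    cases i with
    | zero => simp [SimpleGraph.Walk.getVert, SimpleGraph.dist_self]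
    | succ i =>
      rw [SimpleGraph.Walk.getVert_cons_succ]
      calc G.dist a (q.getVert i) ≤ G.dist a b + G.dist b (q.getVert i) :=
            hc.dist_triangle
        _ ≤ 1 + i := by
            gcongr
            · exact (SimpleGraph.dist_le (SimpleGraph.Walk.cons h SimpleGraph.Walk.nil)).trans
                (by simp)
            · exact ih i
        _ = i + 1 := Nat.add_comm 1 i

lemma dist_getVert_to_end_le {V : Type*} (G : SimpleGraph V) {u v : V}
    (p : G.Walk u v) (i : ℕ) :
    G.dist (p.getVert i) v ≤ p.length - i := by
  induction p generalizing i with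
  | nil => simp [SimpleGraph.Walk.getVert, SimpleGraph.dist_self]
  | @cons a b c h q ih =>
    cases i with
    | zero =>
      simpa using SimpleGraph.dist_le (SimpleGraph.Walk.cons h q)
    | succ i =>
      rw [SimpleGraph.Walk.getVert_cons_succ]
      simpa using ih i

lemma sphere_card {V : Type} [Fintype V] [DecidableEq V] {G : SimpleGraph V}
    [DecidableRel G.Adj] (hc : G.Connected) (u : V) (d : ℕ)
    (hd : ∀ v, G.degree v ≤ d) (k : ℕ) :
    (Finset.univ.filter (fun w => G.dist u w = k)).card ≤ d ^ k := by
  induction k with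
  | zero =>
    have : (Finset.univ.filter (fun w => G.dist u w = 0)) ⊆ {u} := by
      intro w hw
      rw [Finset.mem_filter] at hw
      rw [Finset.mem_singleton]
      exact (hc.dist_eq_zero_iff.mp hw.2).symm
    simpa using Finset.card_le_card this
  | succ k ih =>
    have hsub : (Finset.univ.filter (fun w => G.dist u w = k + 1)) ⊆
        (Finset.univ.filter (fun w => G.dist u w = k)).biUnion (fun x => G.neighborFinset x) := by
      intro w hw
      rw [Finset.mem_filter] at hw
      obtain ⟨p, hp⟩ := hc.exists_walk_length_eq_dist u w
      rw [hw.2] at hp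
      have hx1 : G.dist u (p.getVert k) ≤ k := dist_getVert_le hc p k
      have hx2 : G.dist u (p.getVert k) = k := by
        have h3 : G.dist (p.getVert k) w ≤ 1 := by
          have := dist_getVert_to_end_le G p k
          omega
        have := hc.dist_triangle (u := u) (v := p.getVert k) (w := w)
        omega
      have hadj : G.Adj (p.getVert k) w := by
        have hk : k < p.length := by omega
        have := p.adj_getVert_succ hk
        rwa [show k + 1 = p.length by omega, p.getVert_length] at this
      rw [Finset.mem_biUnion]
      exact ⟨p.getVert k, Finset.mem_filter.mpr ⟨Finset.mem_univ _, hx2⟩,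
        (G.mem_neighborFinset _ _).mpr hadj⟩
    calc (Finset.univ.filter (fun w => G.dist u w = k + 1)).card
        ≤ ((Finset.univ.filter (fun w => G.dist u w = k)).biUnion (fun x => G.neighborFinset x)).card :=
          Finset.card_le_card hsub
      _ ≤ ∑ x ∈ Finset.univ.filter (fun w => G.dist u w = k), (G.neighborFinset x).card :=
          Finset.card_biUnion_le
      _ ≤ ∑ _x ∈ Finset.univ.filter (fun w => G.dist u w = k), d := by
          exact Finset.sum_le_sum fun x _ => hd x
      _ = (Finset.univ.filter (fun w => G.dist u w = k)).card * d := by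
          simp [Finset.sum_const, Nat.mul_comm]
      _ ≤ d ^ k * d := Nat.mul_le_mul_right _ ih
      _ = d ^ (k + 1) := (pow_succ d k).symm

lemma card_le_of_small_ecc {V : Type} [Fintype V] [DecidableEq V] {G : SimpleGraph V}
    [DecidableRel G.Adj] (hc : G.Connected) (u : V) (d n : ℕ)
    (hd : ∀ v, G.degree v ≤ d) (hecc : ∀ w, G.dist u w < n) :
    Fintype.card V ≤ ∑ k ∈ Finset.range n, d ^ k := by
  have hcov : (Finset.univ : Finset V) ⊆
      (Finset.range n).biUnion (fun k => Finset.univ.filter (fun w => G.dist u w = k)) := by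
    intro w _
    rw [Finset.mem_biUnion]
    exact ⟨G.dist u w, Finset.mem_range.mpr (hecc w), Finset.mem_filter.mpr ⟨Finset.mem_univ _, rfl⟩⟩
  calc Fintype.card V = (Finset.univ : Finset V).card := rfl
    _ ≤ _ := Finset.card_le_card hcov
    _ ≤ ∑ k ∈ Finset.range n, (Finset.univ.filter (fun w => G.dist u w = k)).card :=
        Finset.card_biUnion_le
    _ ≤ ∑ k ∈ Finset.range n, d ^ k :=
        Finset.sum_le_sum fun k _ => sphere_card hc u d hd k

lemma ramsey (m : ℕ) : ∀ (a b : ℕ), a + b ≤ m →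
    ∀ {V : Type} [DecidableEq V] (G : SimpleGraph V) [DecidableRel G.Adj] (s : Finset V),
    2 ^ (a + b) ≤ s.card →
    (∃ t ⊆ s, t.card = a ∧ G.IsClique ↑t) ∨
    (∃ t ⊆ s, t.card = b ∧ (↑t : Set V).Pairwise fun x y => ¬ G.Adj x y) := by
  induction m with
  | zero =>
    intro a b hab V _ G _ s _
    have ha : a = 0 := by omega
    subst ha
    exact Or.inl ⟨∅, empty_subset _, rfl, by simp [SimpleGraph.IsClique]⟩
  | succ m ih =>
    intro a b hab V _ G _ s hs
    match a, b with
    | 0, b => exact Or.inl ⟨∅, empty_subset _, rfl, by simp [SimpleGraph.IsClique]⟩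
    | a+1, 0 => exact Or.inr ⟨∅, empty_subset _, rfl, by simp⟩
    | a+1, b+1 =>
      have hpos : 0 < s.card := lt_of_lt_of_le (Nat.two_pow_pos _) hs
      obtain ⟨v, hv⟩ := Finset.card_pos.mp hpos
      set s' := s.erase v with hs'
      set nb := s'.filter (fun x => G.Adj v x) with hnb
      set nn := s'.filter (fun x => ¬ G.Adj v x) with hnn
      have hsplit : nb.card + nn.card = s'.card := by
        rw [hnb, hnn]; exact Finset.card_filter_add_card_filter_not _
      have hs'card : s.card - 1 = s'.card := by
        rw [hs', Finset.card_erase_of_mem hv]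
      have hbig : 2 ^ (a + (b+1)) ≤ nb.card ∨ 2 ^ ((a+1) + b) ≤ nn.card := by
        by_contra hcon
        push_neg at hcon
        have h1 : nb.card + nn.card ≤ 2 ^ (a + (b+1)) - 1 + (2 ^ ((a+1) + b) - 1) := by
          omega
        have h2 : 2 ^ (a + (b+1)) + 2 ^ ((a+1) + b) = 2 ^ (a + 1 + (b + 1)) := by
          rw [show a + (b+1) = a + b + 1 by ring, show (a+1) + b = a + b + 1 by ring,
            show a + 1 + (b+1) = a + b + 1 + 1 by ring, pow_succ]
          ring
        have hp : 1 ≤ 2 ^ (a + (b+1)) := Nat.one_le_two_pow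
        have hp2 : 1 ≤ 2 ^ ((a+1) + b) := Nat.one_le_two_pow
        omega
      rcases hbig with hbig | hbig
      · rcases ih a (b+1) (by omega) G nb hbig with ⟨t, hts, htc, htcl⟩ | ⟨t, hts, htc, hti⟩
        · -- extend clique with v
          have hvt : v ∉ t := fun h => by
            have := hts h
            rw [hnb, Finset.mem_filter] at this
            exact G.irrefl this.2
          refine Or.inl ⟨insert v t, ?_, ?_, ?_⟩
          · intro x hx
            rcases Finset.mem_insert.mp hx with rfl | hx
            · exact hv
            · exact Finset.erase_subset _ _ (Finset.filter_subset _ _ (hts hx))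
          · rw [Finset.card_insert_of_notMem hvt, htc]
          · rw [Finset.coe_insert]
            refine htcl.insert ?_
            intro x hx _
            have := hts hx
            rw [hnb, Finset.mem_filter] at this
            exact this.2
        · exact Or.inr ⟨t, hts.trans ((Finset.filter_subset _ _).trans (Finset.erase_subset _ _)),
            htc, hti⟩
      · rcases ih (a+1) b (by omega) G nn hbig with ⟨t, hts, htc, htcl⟩ | ⟨t, hts, htc, hti⟩
        · exact Or.inl ⟨t, hts.trans ((Finset.filter_subset _ _).trans (Finset.erase_subset _ _)),
            htc, htcl⟩
        · -- extend indep with v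
          have hvt : v ∉ t := fun h => by
            have := hts h
            rw [hnn, Finset.mem_filter, hs', Finset.mem_erase] at this
            exact this.1.1 rfl
          refine Or.inr ⟨insert v t, ?_, ?_, ?_⟩
          · intro x hx
            rcases Finset.mem_insert.mp hx with rfl | hx
            · exact hv
            · exact Finset.erase_subset _ _ (Finset.filter_subset _ _ (hts hx))
          · rw [Finset.card_insert_of_notMem hvt, htc]
          · rw [Finset.coe_insert]
            refine hti.insert ?_
            intro x hx _
            have hx' := hts hx
            rw [hnn, Finset.mem_filter] at hx'
            constructor
            · exact fun h => hx'.2 h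
            · exact fun h => hx'.2 (G.adj_symm h)

section helpers
lemma hasInducedCopy_of {V W : Type*} (G : SimpleGraph V) (H : SimpleGraph W)
    (f : W → V) (hf : Injective f)
    (h : ∀ a b, G.Adj (f a) (f b) ↔ H.Adj a b) :
    ∃ s : Set V, Nonempty (H ≃g G.induce s) := by
  refine ⟨Set.range f, ⟨⟨Equiv.ofInjective f hf, ?_⟩⟩⟩
  intro a b
  simp [comap_adj, Equiv.ofInjective_apply, h]

lemma clique_copy {V : Type} [DecidableEq V] (G : SimpleGraph V) (n : ℕ)
    (t : Finset V) (htc : t.card = n) (hcl : G.IsClique ↑t) :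
    ∃ s : Set V, Nonempty ((⊤ : SimpleGraph (Fin n)) ≃g G.induce s) := by
  have e : Fin n ≃ ↥t := (finCongr htc.symm).trans t.equivFin.symm
  refine hasInducedCopy_of G _ (fun i => ((e i : ↥t) : V))
    (Subtype.coe_injective.comp e.injective) ?_
  intro a b
  simp only [top_adj]
  constructor
  · intro h hab
    subst hab
    exact G.irrefl h
  · intro hab
    exact hcl (by simp) (by simp) (fun h => hab (e.injective (Subtype.coe_injective h)))

lemma star_copy {V : Type} [DecidableEq V] (G : SimpleGraph V) (n : ℕ) (v : V)
    (t : Finset V) (hts : ∀ x ∈ t, G.Adj v x) (htc : t.card = n)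
    (hind : (↑t : Set V).Pairwise fun x y => ¬ G.Adj x y) :
    ∃ s : Set V, Nonempty ((completeBipartiteGraph (Fin 1) (Fin n)) ≃g G.induce s) := by
  have e : Fin n ≃ ↥t := (finCongr htc.symm).trans t.equivFin.symm
  refine hasInducedCopy_of G _ (Sum.elim (fun _ => v) (fun i => ((e i : ↥t) : V))) ?_ ?_
  · intro a b hab
    match a, b with
    | Sum.inl a, Sum.inl b => simp [Subsingleton.elim a b]
    | Sum.inl a, Sum.inr b =>
      exfalso
      simp only [Sum.elim_inl, Sum.elim_inr] at hab
      exact G.irrefl (hab ▸ hts _ (e b).2)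
    | Sum.inr a, Sum.inl b =>
      exfalso
      simp only [Sum.elim_inl, Sum.elim_inr] at hab
      exact G.irrefl (hab ▸ hts _ (e a).2)
    | Sum.inr a, Sum.inr b =>
      simp only [Sum.elim_inr] at hab
      simp [e.injective (Subtype.coe_injective hab)]
  · intro a b
    match a, b with
    | Sum.inl a, Sum.inl b =>
      simp
    | Sum.inl a, Sum.inr b =>
      simp only [Sum.elim_inl, Sum.elim_inr, completeBipartiteGraph_adj]
      simpa using hts _ (e b).2
    | Sum.inr a, Sum.inl b =>
      simp only [Sum.elim_inl, Sum.elim_inr, completeBipartiteGraph_adj]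
      simpa using G.adj_symm (hts _ (e a).2)
    | Sum.inr a, Sum.inr b =>
      simp only [Sum.elim_inr, completeBipartiteGraph_adj]
      constructor
      · intro h
        exfalso
        rcases eq_or_ne a b with rfl | hab
        · exact G.irrefl h
        · exact hind (by simp) (by simp)
            (fun hh => hab (e.injective (Subtype.coe_injective hh))) h
      · simp

lemma path_copy {V : Type} (G : SimpleGraph V) (n : ℕ) (f : Fin n → V)
    (hf : Injective f)
    (hadj : ∀ i j : Fin n, G.Adj (f i) (f j) ↔ (i.val + 1 = j.val ∨ j.val + 1 = i.val)) :
    ∃ s : Set V, Nonempty ((SimpleGraph.pathGraph n) ≃g G.induce s) := by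
  refine hasInducedCopy_of G _ f hf ?_
  intro a b
  rw [hadj, pathGraph_adj]
end helpers

theorem stmt2' (n : ℕ) (hn : 1 ≤ n) :
    ∃ N : ℕ, ∀ (V : Type) (_ : Fintype V) (G : SimpleGraph V),
      G.Connected → N ≤ Fintype.card V →
        (∃ s : Set V, Nonempty ((SimpleGraph.pathGraph n) ≃g G.induce s)) ∨
        (∃ s : Set V, Nonempty ((⊤ : SimpleGraph (Fin n)) ≃g G.induce s)) ∨
        (∃ s : Set V, Nonempty ((completeBipartiteGraph (Fin 1) (Fin n)) ≃g G.induce s)) := by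
  classical
  set R := 2 ^ (n + n) with hR
  refine ⟨1 + ∑ k ∈ Finset.range n, R ^ k, ?_⟩
  intro V _ G hc hcard
  by_cases hdeg : ∃ v, R ≤ G.degree v
  · obtain ⟨v, hv⟩ := hdeg
    have hs : 2 ^ (n + n) ≤ (G.neighborFinset v).card := by
      rwa [G.card_neighborFinset_eq_degree]
    rcases ramsey (n + n) n n le_rfl G (G.neighborFinset v) hs with
      ⟨t, hts, htc, hcl⟩ | ⟨t, hts, htc, hind⟩
    · exact Or.inr (Or.inl (clique_copy G n t htc hcl))
    · refine Or.inr (Or.inr (star_copy G n v t ?_ htc hind))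
      intro x hx
      exact (G.mem_neighborFinset _ _).mp (hts hx)
  · push_neg at hdeg
    have hVpos : 0 < Fintype.card V := by omega
    obtain ⟨u⟩ := Fintype.card_pos_iff.mp hVpos
    have hfar : ∃ w, n ≤ G.dist u w := by
      by_contra hcon
      push_neg at hcon
      have := card_le_of_small_ecc hc u R n (fun v => (hdeg v).le) hcon
      omega
    obtain ⟨w, hw⟩ := hfar
    obtain ⟨p, hp⟩ := hc.exists_walk_length_eq_dist u w
    left
    have hlen : n ≤ p.length := by omega
    have hdist : ∀ i : Fin n, G.dist u (p.getVert i) = i := by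
      intro i
      have h1 : G.dist u (p.getVert i) ≤ i := dist_getVert_le hc p i
      have h2 : G.dist (p.getVert i) w ≤ p.length - i := dist_getVert_to_end_le G p i
      have h3 : G.dist u w ≤ G.dist u (p.getVert i) + G.dist (p.getVert i) w :=
        hc.dist_triangle
      have hi : (i : ℕ) < n := i.isLt
      omega
    have hinj : Injective (fun i : Fin n => p.getVert i) := by
      intro i j hij
      simp only at hij
      have h1 := hdist i
      rw [hij, hdist j] at h1
      exact Fin.ext h1.symm
    refine path_copy G n (fun i => p.getVert i) hinj ?_
    intro i j
    constructor
    · intro hadj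
      have hne : (i : ℕ) ≠ (j : ℕ) := by
        intro h
        exact G.irrefl ((Fin.ext h : i = j) ▸ hadj)
      have hd1 : G.dist (p.getVert i) (p.getVert j) ≤ 1 :=
        (SimpleGraph.dist_le (SimpleGraph.Walk.cons hadj SimpleGraph.Walk.nil)).trans (by simp)
      have hij : G.dist u (p.getVert j) ≤ G.dist u (p.getVert i) + 1 := by
        have := hc.dist_triangle (u := u) (v := p.getVert i) (w := p.getVert j)
        omega
      have hji : G.dist u (p.getVert i) ≤ G.dist u (p.getVert j) + 1 := by
        have h4 : G.dist (p.getVert j) (p.getVert i) ≤ 1 := by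
          rwa [SimpleGraph.dist_comm] at hd1
        have := hc.dist_triangle (u := u) (v := p.getVert j) (w := p.getVert i)
        omega
      rw [hdist i, hdist j] at hij hji
      omega
    · intro hij
      rcases hij with hij | hij
      · have hlt : (i : ℕ) < p.length := by
          have : (j : ℕ) < n := j.isLt
          omega
        have := p.adj_getVert_succ hlt
        rwa [hij] at this
      · have hlt : (j : ℕ) < p.length := by
          have : (i : ℕ) < n := i.isLt
          omega
        have := p.adj_getVert_succ hlt
        rw [hij] at this
        exact G.adj_symm this

end Helpers

theorem stmt2 (n : ℕ) (hn : 1 ≤ n) :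
    ∃ N : ℕ, ∀ (V : Type) (_ : Fintype V) (G : SimpleGraph V),
      G.Connected → N ≤ Fintype.card V →
        HasInducedCopy G (SimpleGraph.pathGraph n) ∨
        HasInducedCopy G (⊤ : SimpleGraph (Fin n)) ∨
        HasInducedCopy G (completeBipartiteGraph (Fin 1) (Fin n)) := by
  exact stmt2' n hn
end

section
/- For every positive integer n there exists an integer N such that every connected graph with independence number at least N contains an induced subgraph isomorphic to P_n, H_n^1, or K_{1,n}. -/
open SimpleGraph Finset

/-- An independent set: pairwise non-adjacent vertices. -/
def IsIndepSet' {V : Type*} (G : SimpleGraph V) (s : Set V) : Prop :=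
  s.Pairwise fun a b => ¬ G.Adj a b

namespace Stmt3Aux

lemma hasCopy {V W : Type*} (G : SimpleGraph V) (H : SimpleGraph W) (f : W → V)
    (hinj : Function.Injective f)
    (hadj : ∀ a b, G.Adj (f a) (f b) ↔ H.Adj a b) : HasInducedCopy G H := by
  refine ⟨Set.range f, ⟨⟨Equiv.ofInjective f hinj, ?_⟩⟩⟩
  intro a b
  simpa using hadj a b

def Rnum (a b : ℕ) : ℕ := (a + b).choose a

lemma le_Rnum {a b : ℕ} (ha : 1 ≤ a) : b ≤ Rnum a b := by
  unfold Rnum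
  have h0 : (a + b) - a = b := by omega
  have h1 : (a + b).choose a = (a + b).choose b := by
    rw [← Nat.choose_symm (Nat.le_add_right a b), h0]
  rw [h1]
  calc b ≤ (b + 1).choose b := by rw [Nat.choose_succ_self_right]; omega
    _ ≤ (a + b).choose b := Nat.choose_le_choose b (by omega)

lemma ramsey {V : Type} (G : SimpleGraph V) :
    ∀ a b (s : Finset V), Rnum a b ≤ s.card →
      (∃ t ⊆ s, t.card = a ∧ (t : Set V).Pairwise G.Adj) ∨
      (∃ t ⊆ s, t.card = b ∧ (t : Set V).Pairwise fun x y => ¬ G.Adj x y) := by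
  classical
  intro a
  induction a with
  | zero =>
    intro b s _
    exact Or.inl ⟨∅, empty_subset _, rfl, by simp⟩
  | succ a iha =>
    intro b
    induction b with
    | zero =>
      intro s _
      exact Or.inr ⟨∅, empty_subset _, rfl, by simp⟩
    | succ b ihb =>
      intro s hs
      have hpos : 0 < s.card := lt_of_lt_of_le (Nat.choose_pos (by omega)) hs
      obtain ⟨v, hv⟩ := Finset.card_pos.mp hpos
      set sN := (s.erase v).filter (fun x => G.Adj v x) with hsN
      set sI := (s.erase v).filter (fun x => ¬ G.Adj v x) with hsI
      have hcards : sN.card + sI.card = s.card - 1 := by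
        rw [hsN, hsI, Finset.card_filter_add_card_filter_not,
          Finset.card_erase_of_mem hv]
      have hpascal : Rnum (a + 1) (b + 1) = Rnum a (b + 1) + Rnum (a + 1) b := by
        unfold Rnum
        have h1 : a + 1 + (b + 1) = (a + b + 1) + 1 := by omega
        have h2 : a + (b + 1) = a + b + 1 := by omega
        have h3 : a + 1 + b = a + b + 1 := by omega
        rw [h1, h2, h3, Nat.choose_succ_succ]
      rcases le_or_gt (Rnum a (b + 1)) sN.card with hN | hN
      · rcases iha (b + 1) sN hN with ⟨t, hts, htc, htp⟩ | ⟨t, hts, htc, htp⟩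
        · refine Or.inl ⟨insert v t, ?_, ?_, ?_⟩
          · intro x hx
            rcases Finset.mem_insert.mp hx with rfl | hx
            · exact hv
            · exact Finset.mem_of_mem_erase (Finset.mem_of_mem_filter _ (hts hx))
          · rw [Finset.card_insert_of_notMem, htc]
            intro hvt
            exact Finset.notMem_erase v s (Finset.mem_of_mem_filter _ (hts hvt))
          · rw [Finset.coe_insert]
            refine (haveI : Std.Symm G.Adj := ⟨fun x y h => h.symm⟩; Set.pairwise_insert_of_symm) |>.mpr ⟨htp, ?_⟩
            intro x hx _
            exact (Finset.mem_filter.mp (hts hx)).2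
        · exact Or.inr ⟨t, hts.trans ((Finset.filter_subset _ _).trans (Finset.erase_subset _ _)),
            htc, htp⟩
      · have hI : Rnum (a + 1) b ≤ sI.card := by omega
        rcases ihb sI hI with ⟨t, hts, htc, htp⟩ | ⟨t, hts, htc, htp⟩
        · exact Or.inl ⟨t, hts.trans ((Finset.filter_subset _ _).trans (Finset.erase_subset _ _)),
            htc, htp⟩
        · refine Or.inr ⟨insert v t, ?_, ?_, ?_⟩
          · intro x hx
            rcases Finset.mem_insert.mp hx with rfl | hx
            · exact hv
            · exact Finset.mem_of_mem_erase (Finset.mem_of_mem_filter _ (hts hx))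
          · rw [Finset.card_insert_of_notMem, htc]
            intro hvt
            exact Finset.notMem_erase v s (Finset.mem_of_mem_filter _ (hts hvt))
          · rw [Finset.coe_insert]
            refine (haveI : Std.Symm (fun x y => ¬ G.Adj x y) := ⟨fun x y h => fun ha => h ha.symm⟩; Set.pairwise_insert_of_symm) |>.mpr
              ⟨htp, ?_⟩
            intro x hx _
            exact (Finset.mem_filter.mp (hts hx)).2

lemma greedy {V : Type} [DecidableEq V] :
    ∀ (k : ℕ) (t : Finset V) (bad : V → V → Prop) [DecidableRel bad] (d : ℕ),
      (∀ c ∈ t, (t.filter (fun c' => bad c c')).card ≤ d) → k * (2 * d + 1) ≤ t.card →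
      ∃ u ⊆ t, u.card = k ∧ ∀ x ∈ u, ∀ y ∈ u, x ≠ y → ¬ bad x y ∧ ¬ bad y x := by
  intro k
  induction k with
  | zero => intro t bad _ d _ _; exact ⟨∅, empty_subset _, rfl, by simp⟩
  | succ k ih =>
    intro t bad _ d hdeg hcard
    have hpos : 0 < t.card := by
      have : 0 < (k + 1) * (2 * d + 1) := Nat.mul_pos k.succ_pos (by omega)
      omega
    -- double counting: some vertex has in-degree ≤ d
    have hsum : ∑ c ∈ t, (t.filter (fun c' => bad c' c)).card
        = ∑ c ∈ t, (t.filter (fun c' => bad c c')).card := by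
      simp only [Finset.card_filter]
      rw [Finset.sum_comm]
    have hsum2 : ∑ c ∈ t, (t.filter (fun c' => bad c' c)).card ≤ d * t.card := by
      rw [hsum]
      calc ∑ c ∈ t, (t.filter (fun c' => bad c c')).card ≤ ∑ _c ∈ t, d :=
            Finset.sum_le_sum hdeg
        _ = d * t.card := by rw [Finset.sum_const, smul_eq_mul, mul_comm]
    have hex : ∃ c₀ ∈ t, (t.filter (fun c' => bad c' c₀)).card ≤ d := by
      by_contra hcon
      push_neg at hcon
      have : d * t.card < ∑ c ∈ t, (t.filter (fun c' => bad c' c)).card := by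
        calc d * t.card < (d + 1) * t.card := by
              have : 0 < t.card := hpos; nlinarith
          _ = ∑ _c ∈ t, (d + 1) := by rw [Finset.sum_const, smul_eq_mul, mul_comm]
          _ ≤ ∑ c ∈ t, (t.filter (fun c' => bad c' c)).card :=
              Finset.sum_le_sum fun c hc => hcon c hc
      omega
    obtain ⟨c₀, hc₀t, hc₀in⟩ := hex
    set X : Finset V := insert c₀
      ((t.filter (fun c' => bad c₀ c')) ∪ (t.filter (fun c' => bad c' c₀))) with hX
    have hXcard : X.card ≤ 2 * d + 1 := by
      calc X.card ≤ ((t.filter (fun c' => bad c₀ c')) ∪ (t.filter (fun c' => bad c' c₀))).card + 1 :=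
            Finset.card_insert_le _ _
        _ ≤ ((t.filter (fun c' => bad c₀ c')).card + (t.filter (fun c' => bad c' c₀)).card) + 1 :=
            by have := Finset.card_union_le (t.filter (fun c' => bad c₀ c'))
                 (t.filter (fun c' => bad c' c₀)); omega
        _ ≤ 2 * d + 1 := by have := hdeg c₀ hc₀t; omega
    set t' : Finset V := t \ X with ht'
    have ht'card : k * (2 * d + 1) ≤ t'.card := by
      have h1 : t.card ≤ t'.card + X.card := Finset.card_le_card_sdiff_add_card
      have h2 : (k + 1) * (2 * d + 1) = k * (2 * d + 1) + (2 * d + 1) := by ring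
      omega
    have ht'deg : ∀ c ∈ t', (t'.filter (fun c' => bad c c')).card ≤ d := by
      intro c hc
      calc (t'.filter (fun c' => bad c c')).card ≤ (t.filter (fun c' => bad c c')).card :=
            Finset.card_le_card (Finset.filter_subset_filter _ (Finset.sdiff_subset))
        _ ≤ d := hdeg c (Finset.mem_sdiff.mp hc).1
    obtain ⟨u', hu't, hu'c, hu'good⟩ := ih t' bad d ht'deg ht'card
    have hc₀X : c₀ ∈ X := Finset.mem_insert_self _ _
    have hc₀u' : c₀ ∉ u' := fun h => (Finset.mem_sdiff.mp (hu't h)).2 hc₀X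
    refine ⟨insert c₀ u', ?_, ?_, ?_⟩
    · intro x hx
      rcases Finset.mem_insert.mp hx with rfl | hx
      · exact hc₀t
      · exact Finset.sdiff_subset (hu't hx)
    · rw [Finset.card_insert_of_notMem hc₀u', hu'c]
    · intro x hx y hy hxy
      have key : ∀ z ∈ u', ¬ bad c₀ z ∧ ¬ bad z c₀ := by
        intro z hz
        have hzt' := hu't hz
        have hzX : z ∉ X := (Finset.mem_sdiff.mp hzt').2
        have hzt : z ∈ t := (Finset.mem_sdiff.mp hzt').1
        constructor
        · intro hb
          exact hzX (Finset.mem_insert_of_mem (Finset.mem_union_left _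
            (Finset.mem_filter.mpr ⟨hzt, hb⟩)))
        · intro hb
          exact hzX (Finset.mem_insert_of_mem (Finset.mem_union_right _
            (Finset.mem_filter.mpr ⟨hzt, hb⟩)))
      rcases Finset.mem_insert.mp hx with hx0 | hx <;>
        rcases Finset.mem_insert.mp hy with hy0 | hy
      · exact absurd (hx0.trans hy0.symm) hxy
      · rw [hx0]; exact key y hy
      · rw [hy0]; exact ⟨(key x hx).2, (key x hx).1⟩
      · exact hu'good x hx y hy hxy

lemma exists_penultimate {V : Type} {G : SimpleGraph V} (hc : G.Connected) {r a : V} {k : ℕ}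
    (h : G.dist r a = k + 1) : ∃ u, G.Adj u a ∧ G.dist r u = k := by
  obtain ⟨p, hp⟩ := hc.exists_walk_length_eq_dist a r
  rw [SimpleGraph.dist_comm, h] at hp
  cases p with
  | nil => simp at hp
  | @cons _ b _ hab p' =>
    refine ⟨b, hab.symm, ?_⟩
    have h1 : G.dist r b ≤ k := by
      have := SimpleGraph.dist_le p'.reverse
      simp only [SimpleGraph.Walk.length_reverse] at this
      simp only [SimpleGraph.Walk.length_cons] at hp
      omega
    have h2 : G.dist r a ≤ G.dist r b + 1 := by
      have htri := hc.dist_triangle (u := r) (v := b) (w := a)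
      have : G.dist b a ≤ 1 := by
        have := SimpleGraph.dist_le (SimpleGraph.Walk.cons hab.symm SimpleGraph.Walk.nil)
        simpa using this
      omega
    omega

lemma copy_star {V : Type} (G : SimpleGraph V) {n : ℕ} (u : V) (l : Fin n → V)
    (hinj : Function.Injective l)
    (hne : ∀ i, l i ≠ u) (hadj : ∀ i, G.Adj u (l i))
    (hind : ∀ i j, i ≠ j → ¬ G.Adj (l i) (l j)) :
    HasInducedCopy G (completeBipartiteGraph (Fin 1) (Fin n)) := by
  refine hasCopy G _ (Sum.elim (fun _ => u) l) ?_ ?_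
  · intro a b hab
    match a, b with
    | Sum.inl i, Sum.inl j => simp [Subsingleton.elim i j]
    | Sum.inl i, Sum.inr j => exact absurd hab.symm (hne j)
    | Sum.inr i, Sum.inl j => exact absurd hab (hne i)
    | Sum.inr i, Sum.inr j => simp [hinj hab]
  · intro a b
    match a, b with
    | Sum.inl i, Sum.inl j => simpa [completeBipartiteGraph] using G.irrefl
    | Sum.inl i, Sum.inr j => simp [completeBipartiteGraph, hadj j]
    | Sum.inr i, Sum.inl j => simp [completeBipartiteGraph, (hadj i).symm]
    | Sum.inr i, Sum.inr j =>
      simp only [Sum.elim_inr, completeBipartiteGraph]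
      by_cases hij : i = j
      · subst hij; simpa using G.irrefl
      · simpa using hind i j hij

lemma copy_H {V : Type} (G : SimpleGraph V) {n : ℕ} (c p : Fin n → V)
    (hcinj : Function.Injective c) (hpinj : Function.Injective p)
    (hdisj : ∀ i j, c i ≠ p j)
    (hclique : ∀ i j, i ≠ j → G.Adj (c i) (c j))
    (hpend : ∀ i, G.Adj (c i) (p i))
    (hnc : ∀ i j, i ≠ j → ¬ G.Adj (c i) (p j))
    (hpind : ∀ i j, i ≠ j → ¬ G.Adj (p i) (p j)) :
    HasInducedCopy G (Hgraph1 n) := by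
  refine hasCopy G _ (Sum.elim c p) ?_ ?_
  · intro a b hab
    match a, b with
    | Sum.inl i, Sum.inl j => simp [hcinj hab]
    | Sum.inl i, Sum.inr j => exact absurd hab (hdisj i j)
    | Sum.inr i, Sum.inl j => exact absurd hab.symm (hdisj j i)
    | Sum.inr i, Sum.inr j => simp [hpinj hab]
  · intro a b
    match a, b with
    | Sum.inl i, Sum.inl j =>
      by_cases hij : i = j
      · subst hij; simp [Hgraph1, G.irrefl]
      · simp only [Sum.elim_inl, Hgraph1, SimpleGraph.fromRel_adj]
        constructor
        · intro _; exact ⟨by simpa using hij, Or.inl trivial⟩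
        · intro _; exact hclique i j hij
    | Sum.inl i, Sum.inr j =>
      simp only [Sum.elim_inl, Sum.elim_inr, Hgraph1, SimpleGraph.fromRel_adj]
      by_cases hij : i = j
      · subst hij; simp [hpend i]
      · constructor
        · intro h; exact absurd h (hnc i j hij)
        · rintro ⟨-, h | h⟩
          · exact absurd h hij
          · exact h.elim
    | Sum.inr i, Sum.inl j =>
      simp only [Sum.elim_inl, Sum.elim_inr, Hgraph1, SimpleGraph.fromRel_adj]
      by_cases hij : i = j
      · subst hij; simp [(hpend i).symm]
      · constructor
        · intro h; exact absurd h.symm (hnc j i (Ne.symm hij))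
        · rintro ⟨-, h | h⟩
          · exact h.elim
          · exact absurd h (Ne.symm hij)
    | Sum.inr i, Sum.inr j =>
      by_cases hij : i = j
      · subst hij; simp [Hgraph1, G.irrefl]
      · simp only [Sum.elim_inr, Hgraph1, SimpleGraph.fromRel_adj]
        constructor
        · intro h; exact absurd h (hpind i j hij)
        · rintro ⟨-, h | h⟩ <;> exact h.elim

lemma copy_path {V : Type} (G : SimpleGraph V) (hc : G.Connected) {u v : V} {n : ℕ}
    (hn : 1 ≤ n) (h : n - 1 ≤ G.dist u v) : HasInducedCopy G (SimpleGraph.pathGraph n) := by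
  obtain ⟨p, hp⟩ := hc.exists_walk_length_eq_dist u v
  set D := G.dist u v with hD
  have claim1 : ∀ i, i ≤ D → G.dist u (p.getVert i) ≤ i := by
    intro i
    induction i with
    | zero => intro _; simp
    | succ i ih =>
      intro hi
      have h1 := ih (by omega)
      have hadj : G.Adj (p.getVert i) (p.getVert (i + 1)) :=
        p.adj_getVert_succ (by omega)
      have h2 : G.dist (p.getVert i) (p.getVert (i+1)) ≤ 1 := by
        simpa using SimpleGraph.dist_le (SimpleGraph.Walk.cons hadj SimpleGraph.Walk.nil)
      have := hc.dist_triangle (u := u) (v := p.getVert i) (w := p.getVert (i+1))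
      omega
  have claim2 : ∀ j, j ≤ D → G.dist (p.getVert (D - j)) v ≤ j := by
    intro j
    induction j with
    | zero =>
      intro _
      have : p.getVert D = v := by rw [← hp]; exact p.getVert_length
      simp [this]
    | succ j ih =>
      intro hj
      have h1 := ih (by omega)
      have hadj : G.Adj (p.getVert (D - (j+1))) (p.getVert (D - (j+1) + 1)) :=
        p.adj_getVert_succ (by omega)
      have heq : D - (j+1) + 1 = D - j := by omega
      rw [heq] at hadj
      have h2 : G.dist (p.getVert (D - (j+1))) (p.getVert (D - j)) ≤ 1 := by
        simpa using SimpleGraph.dist_le (SimpleGraph.Walk.cons hadj SimpleGraph.Walk.nil)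
      have := hc.dist_triangle (u := p.getVert (D - (j+1))) (v := p.getVert (D - j)) (w := v)
      omega
  have claim3 : ∀ i, i ≤ D → G.dist u (p.getVert i) = i := by
    intro i hi
    have h1 := claim1 i hi
    have h2 := claim2 (D - i) (by omega)
    rw [show D - (D - i) = i by omega] at h2
    have := hc.dist_triangle (u := u) (v := p.getVert i) (w := v)
    omega
  have hfin : ∀ i : Fin n, (i : ℕ) ≤ D := fun i => by have := i.isLt; omega
  refine hasCopy G _ (fun i : Fin n => p.getVert i) ?_ ?_
  · intro a b hab
    have ha := claim3 a (hfin a)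
    have hb := claim3 b (hfin b)
    have heq : G.dist u (p.getVert a) = G.dist u (p.getVert b) := by
      rw [show p.getVert (a : ℕ) = p.getVert (b : ℕ) from hab]
    exact Fin.ext (by omega)
  · intro a b
    rw [SimpleGraph.pathGraph_adj]
    constructor
    · intro hadj
      rcases lt_trichotomy (a : ℕ) (b : ℕ) with hab | hab | hab
      · left
        by_contra hne
        have h2 : (a : ℕ) + 2 ≤ b := by omega
        have hda := claim3 a (hfin a)
        have hdb := claim3 b (hfin b)
        have h3 : G.dist (p.getVert a) (p.getVert b) ≤ 1 := by
          simpa using SimpleGraph.dist_le (SimpleGraph.Walk.cons hadj SimpleGraph.Walk.nil)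
        have := hc.dist_triangle (u := u) (v := p.getVert a) (w := p.getVert b)
        omega
      · have : a = b := Fin.ext hab
        subst this
        exact absurd hadj (G.loopless.irrefl _)
      · right
        by_contra hne
        have h2 : (b : ℕ) + 2 ≤ a := by omega
        have hda := claim3 a (hfin a)
        have hdb := claim3 b (hfin b)
        have h3 : G.dist (p.getVert b) (p.getVert a) ≤ 1 := by
          simpa using SimpleGraph.dist_le (SimpleGraph.Walk.cons hadj.symm SimpleGraph.Walk.nil)
        have := hc.dist_triangle (u := u) (v := p.getVert b) (w := p.getVert a)
        omega
    · intro hab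
      rcases hab with hab | hab
      · have : (a : ℕ) < D := by have := hfin b; omega
        have := p.adj_getVert_succ (by omega : (a:ℕ) < p.length)
        rwa [show (a : ℕ) + 1 = (b : ℕ) from hab] at this
      · have : (b : ℕ) < D := by have := hfin a; omega
        have := p.adj_getVert_succ (by omega : (b:ℕ) < p.length)
        rw [show (b : ℕ) + 1 = (a : ℕ) from hab] at this
        exact this.symm

def svals (n : ℕ) : ℕ → ℕ
  | 0 => 2
  | 1 => n
  | (k+2) => (n - 1) * Rnum (n * (2 * n - 1)) (svals n (k+1))

lemma svals_two_le {n : ℕ} (hn : 2 ≤ n) : ∀ k, 2 ≤ svals n k := by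
  intro k
  match k with
  | 0 => exact le_refl 2
  | 1 => exact hn
  | (k+2) =>
    have h1 : 2 ≤ svals n (k+1) := svals_two_le hn (k+1)
    have h2 : svals n (k+1) ≤ Rnum (n * (2 * n - 1)) (svals n (k+1)) :=
      le_Rnum (by have := Nat.mul_pos (show 0 < n by omega) (show 0 < 2*n-1 by omega); omega)
    have h3 : 1 ≤ n - 1 := by omega
    calc 2 ≤ svals n (k+1) := h1
      _ ≤ Rnum (n * (2 * n - 1)) (svals n (k+1)) := h2
      _ ≤ (n - 1) * Rnum (n * (2 * n - 1)) (svals n (k+1)) := Nat.le_mul_of_pos_left _ h3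
      _ = svals n (k+2) := rfl

lemma svals_le_succ {n : ℕ} (hn : 2 ≤ n) : ∀ k, svals n k ≤ svals n (k + 1) := by
  intro k
  match k with
  | 0 => exact hn
  | (k+1) =>
    have h2 : svals n (k+1) ≤ Rnum (n * (2 * n - 1)) (svals n (k+1)) :=
      le_Rnum (by have := Nat.mul_pos (show 0 < n by omega) (show 0 < 2*n-1 by omega); omega)
    have h3 : 1 ≤ n - 1 := by omega
    calc svals n (k+1) ≤ Rnum (n * (2 * n - 1)) (svals n (k+1)) := h2
      _ ≤ (n - 1) * Rnum (n * (2 * n - 1)) (svals n (k+1)) := Nat.le_mul_of_pos_left _ h3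
      _ = svals n (k+2) := rfl

lemma svals_mono {n : ℕ} (hn : 2 ≤ n) {j k : ℕ} (h : j ≤ k) : svals n j ≤ svals n k := by
  induction k with
  | zero =>
    have : j = 0 := by omega
    subst this
    exact le_refl _
  | succ k ih =>
    rcases Nat.lt_or_ge j (k+1) with h' | h'
    · exact le_trans (ih (by omega)) (svals_le_succ hn k)
    · have : j = k + 1 := by omega
      subst this; exact le_refl _

lemma main {V : Type} (G : SimpleGraph V) (hc : G.Connected) {n : ℕ} (hn : 2 ≤ n) (r : V) :
    ∀ (k : ℕ) (A : Finset V), IsIndepSet' G ↑A →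
      (∀ a ∈ A, G.dist r a = k) → svals n k ≤ A.card →
      HasInducedCopy G (SimpleGraph.pathGraph n) ∨ HasInducedCopy G (Hgraph1 n) ∨
        HasInducedCopy G (completeBipartiteGraph (Fin 1) (Fin n)) := by
  classical
  intro k
  induction k with
  | zero =>
    intro A _ hdist hcard
    exfalso
    have hsub : A ⊆ {r} := by
      intro a ha
      have h0 := hdist a ha
      have : r = a := (hc.dist_eq_zero_iff).mp h0
      simp [← this]
    have := Finset.card_le_card hsub
    simp only [Finset.card_singleton] at this
    have h2 : svals n 0 = 2 := rfl
    omega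
  | succ k ih =>
    intro A hind hdist hcard
    -- choose penultimate vertices
    have hpen : ∀ a : V, ∃ u, a ∈ A → (G.Adj u a ∧ G.dist r u = k) := by
      intro a
      by_cases ha : a ∈ A
      · obtain ⟨u, h1, h2⟩ := exists_penultimate hc (hdist a ha)
        exact ⟨u, fun _ => ⟨h1, h2⟩⟩
      · exact ⟨a, fun h => absurd h ha⟩
    choose g hg using hpen
    set U := A.image g with hU
    have hUdist : ∀ u ∈ U, G.dist r u = k := by
      intro u hu
      obtain ⟨a, ha, rfl⟩ := Finset.mem_image.mp hu
      exact (hg a ha).2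
    have hAdist : ∀ a ∈ A, G.dist r a = k + 1 := hdist
    -- a vertex of U is never in A
    have hUA : ∀ u ∈ U, ∀ a ∈ A, u ≠ a := by
      intro u hu a ha h
      subst h
      have h1 := hUdist u hu
      have h2 := hAdist u ha
      omega
    by_cases hbig : ∃ u ∈ U, n ≤ (A.filter (fun a => g a = u)).card
    · -- a star centered at some u ∈ U
      obtain ⟨u, hu, hnle⟩ := hbig
      obtain ⟨t, hts, htc⟩ := Finset.exists_subset_card_eq hnle
      set e := t.equivFinOfCardEq htc with he
      set l : Fin n → V := fun i => (e.symm i : V) with hl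
      have hlmem : ∀ i, l i ∈ A := fun i =>
        Finset.mem_of_mem_filter _ (hts (e.symm i).2)
      have hlfib : ∀ i, g (l i) = u := fun i =>
        (Finset.mem_filter.mp (hts (e.symm i).2)).2
      have hlinj : Function.Injective l := by
        intro i j h
        have := e.symm.injective (Subtype.ext h)
        simpa using this
      refine Or.inr (Or.inr (copy_star G u l hlinj ?_ ?_ ?_))
      · intro i h
        exact hUA u hu (l i) (hlmem i) h.symm
      · intro i
        have := (hg (l i) (hlmem i)).1
        rwa [hlfib i] at this
      · intro i j hij
        exact hind (by simpa using hlmem i) (by simpa using hlmem j)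
          (fun h => hij (hlinj h))
    · push_neg at hbig
      have hfib : ∀ b ∈ U, (A.filter (fun a => g a = b)).card ≤ n - 1 := by
        intro b hb
        have := hbig b hb
        omega
      have hAU : A.card ≤ (n - 1) * U.card :=
        Finset.card_le_mul_card_image A (n - 1) hfib
      -- now split on the level
      match k, ih, hUdist, hAdist, hUA, hcard with
      | 0, _, hUdist, _, hUA, hcard =>
        -- then A is a star around r as soon as some fiber is big... but fibers are small.
        -- Instead: U ⊆ {r}, so A.card ≤ (n-1) < svals n 1 = n. Contradiction.
        exfalso
        have hUr : U ⊆ {r} := by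
          intro x hx
          have : r = x := (hc.dist_eq_zero_iff).mp (hUdist x hx)
          simp [← this]
        have h1 : U.card ≤ 1 := by
          have := Finset.card_le_card hUr
          simpa using this
        have h2 : svals n (0 + 1) = n := rfl
        have h3 : (n - 1) * U.card ≤ (n - 1) * 1 := Nat.mul_le_mul_left _ h1
        omega
      | (k+1), ih, hUdist, hAdist, hUA, hcard =>
        have hsv : svals n (k + 1 + 1) = (n - 1) * Rnum (n * (2 * n - 1)) (svals n (k+1)) := rfl
        have hUcard : Rnum (n * (2 * n - 1)) (svals n (k+1)) ≤ U.card := by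
          have h1 : (n - 1) * Rnum (n * (2 * n - 1)) (svals n (k+1)) ≤ (n - 1) * U.card := by
            omega
          exact Nat.le_of_mul_le_mul_left h1 (by omega)
        rcases ramsey G (n * (2 * n - 1)) (svals n (k+1)) U hUcard with
          ⟨C, hCU, hCcard, hCadj⟩ | ⟨C, hCU, hCcard, hCind⟩
        · -- big clique with pendant representatives
          have hrep : ∀ c : V, ∃ a, c ∈ C → (a ∈ A ∧ g a = c) := by
            intro c
            by_cases hcC : c ∈ C
            · obtain ⟨a, ha, hga⟩ := Finset.mem_image.mp (hCU hcC)
              exact ⟨a, fun _ => ⟨ha, hga⟩⟩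
            · exact ⟨c, fun h => absurd h hcC⟩
          choose p hp using hrep
          have hpA : ∀ c ∈ C, p c ∈ A := fun c hc => (hp c hc).1
          have hgp : ∀ c ∈ C, g (p c) = c := fun c hc => (hp c hc).2
          have hpadj : ∀ c ∈ C, G.Adj c (p c) := by
            intro c hc
            have := (hg (p c) (hpA c hc)).1
            rwa [hgp c hc] at this
          have hpinjC : ∀ c ∈ C, ∀ c' ∈ C, p c = p c' → c = c' := by
            intro c hc c' hc' h
            rw [← hgp c hc, ← hgp c' hc', h]
          by_cases hstar : ∃ c ∈ C, n ≤ (C.filter (fun c' => G.Adj c (p c'))).card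
          · -- star centered at c with leaves pendants
            obtain ⟨c, hcC, hn'⟩ := hstar
            obtain ⟨t, hts, htc⟩ := Finset.exists_subset_card_eq hn'
            set e := t.equivFinOfCardEq htc with he
            set elt : Fin n → V := fun i => (e.symm i : V) with helt
            have heltC : ∀ i, elt i ∈ C := fun i =>
              Finset.mem_of_mem_filter _ (hts (e.symm i).2)
            have heltadj : ∀ i, G.Adj c (p (elt i)) := fun i =>
              (Finset.mem_filter.mp (hts (e.symm i).2)).2
            have heltinj : Function.Injective elt := by
              intro i j h
              have := e.symm.injective (Subtype.ext h)
              simpa using this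
            set l : Fin n → V := fun i => p (elt i) with hldef
            have hlinj : Function.Injective l := by
              intro i j h
              exact heltinj (hpinjC _ (heltC i) _ (heltC j) h)
            refine Or.inr (Or.inr (copy_star G c l hlinj ?_ ?_ ?_))
            · intro i h
              exact hUA c (hCU hcC) (l i) (hpA _ (heltC i)) h.symm
            · intro i
              exact heltadj i
            · intro i j hij
              have h1 := hpA _ (heltC i)
              have h2 := hpA _ (heltC j)
              exact hind (by simpa using h1) (by simpa using h2) (fun h => hij (hlinj h))
          · push_neg at hstar
            have hdeg : ∀ c ∈ C, (C.filter (fun c' => G.Adj c (p c'))).card ≤ n - 1 := by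
              intro c hc
              have := hstar c hc
              omega
            have hgcard : n * (2 * (n - 1) + 1) ≤ C.card := by
              rw [hCcard]
              have : 2 * (n - 1) + 1 = 2 * n - 1 := by omega
              rw [this]
            obtain ⟨D, hDC, hDcard, hDgood⟩ :=
              greedy n C (fun c c' => G.Adj c (p c')) (n - 1) hdeg hgcard
            set e := D.equivFinOfCardEq hDcard with he
            set cf : Fin n → V := fun i => (e.symm i : V) with hcf
            have hcfD : ∀ i, cf i ∈ D := fun i => (e.symm i).2
            have hcfC : ∀ i, cf i ∈ C := fun i => hDC (hcfD i)
            have hcfinj : Function.Injective cf := by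
              intro i j h
              have := e.symm.injective (Subtype.ext h)
              simpa using this
            set pf : Fin n → V := fun i => p (cf i) with hpf
            refine Or.inr (Or.inl (copy_H G cf pf hcfinj ?_ ?_ ?_ ?_ ?_ ?_))
            · intro i j h
              exact (hcfinj (hpinjC _ (hcfC i) _ (hcfC j) h))
            · intro i j
              exact hUA (cf i) (hCU (hcfC i)) (pf j) (hpA _ (hcfC j))
            · intro i j hij
              refine hCadj (by simpa using hcfC i) (by simpa using hcfC j)
                (fun h => hij (hcfinj h))
            · intro i
              exact hpadj _ (hcfC i)
            · intro i j hij
              have hne : cf i ≠ cf j := fun h => hij (hcfinj h)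
              exact (hDgood (cf i) (hcfD i) (cf j) (hcfD j) hne).1
            · intro i j hij
              have h1 := hpA _ (hcfC i)
              have h2 := hpA _ (hcfC j)
              have hne : pf i ≠ pf j := by
                intro h
                exact hij (hcfinj (hpinjC _ (hcfC i) _ (hcfC j) h))
              exact hind (by simpa using h1) (by simpa using h2) hne
        · -- independent set one level down: recurse
          have hCdist : ∀ a ∈ C, G.dist r a = k + 1 := fun a ha => hUdist a (hCU ha)
          exact ih C hCind hCdist (le_of_eq hCcard.symm)

end Stmt3Aux

theorem stmt3 (n : ℕ) (hn : 1 ≤ n) :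
    ∃ N : ℕ, ∀ (V : Type) (_ : Fintype V) (G : SimpleGraph V),
      G.Connected → (∃ s : Finset V, IsIndepSet' G ↑s ∧ N ≤ s.card) →
        HasInducedCopy G (SimpleGraph.pathGraph n) ∨
        HasInducedCopy G (Hgraph1 n) ∨
        HasInducedCopy G (completeBipartiteGraph (Fin 1) (Fin n)) := by
  rcases eq_or_lt_of_le hn with h1 | h2
  · -- n = 1
    refine ⟨1, ?_⟩
    intro V _ G hconn hex
    obtain ⟨s, hind, hcard⟩ := hex
    obtain ⟨v, hv⟩ := Finset.card_pos.mp (show 0 < s.card by omega)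
    subst h1
    left
    refine Stmt3Aux.hasCopy G _ (fun _ : Fin 1 => v) (fun a b _ => Subsingleton.elim a b) ?_
    intro a b
    rw [SimpleGraph.pathGraph_adj]
    constructor
    · intro h; exact absurd h (G.loopless.irrefl v)
    · intro h
      rcases h with h | h <;> · exfalso; omega
  · -- 2 ≤ n
    have hn2 : 2 ≤ n := h2
    refine ⟨(n - 1) * Stmt3Aux.svals n (n - 2), ?_⟩
    intro V _ G hconn hex
    obtain ⟨I, hind, hcard⟩ := hex
    classical
    set S := Stmt3Aux.svals n (n - 2) with hS
    by_cases hfar : ∃ u v : V, n - 1 ≤ G.dist u v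
    · obtain ⟨u, v, h⟩ := hfar
      exact Or.inl (Stmt3Aux.copy_path G hconn hn h)
    · push_neg at hfar
      have hSpos : 2 ≤ S := Stmt3Aux.svals_two_le hn2 (n - 2)
      have hIpos : 0 < I.card := by
        have h3 : 0 < (n - 1) * S := Nat.mul_pos (by omega) (by omega)
        omega
      obtain ⟨r, hr⟩ := Finset.card_pos.mp hIpos
      have hmaps : ∀ x ∈ I, G.dist r x ∈ Finset.range (n - 1) := fun x _ =>
        Finset.mem_range.mpr (hfar r x)
      have hsum : I.card = ∑ j ∈ Finset.range (n - 1),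
          (I.filter (fun x => G.dist r x = j)).card :=
        Finset.card_eq_sum_card_fiberwise hmaps
      have hex2 : ∃ j ∈ Finset.range (n - 1), S ≤ (I.filter (fun x => G.dist r x = j)).card := by
        by_contra hcon
        push_neg at hcon
        have hle : ∑ j ∈ Finset.range (n - 1), (I.filter (fun x => G.dist r x = j)).card
            ≤ ∑ _j ∈ Finset.range (n - 1), (S - 1) :=
          Finset.sum_le_sum fun j hj => by have := hcon j hj; omega
        rw [Finset.sum_const, Finset.card_range, smul_eq_mul] at hle
        have hexp : (n - 1) * (S - 1) + (n - 1) = (n - 1) * S := by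
          rw [← Nat.mul_succ]
          congr 1
          omega
        omega
      obtain ⟨j, hjr, hjcard⟩ := hex2
      set A := I.filter (fun x => G.dist r x = j) with hA
      have hAind : IsIndepSet' G ↑A :=
        Set.Pairwise.mono (Finset.coe_subset.mpr (Finset.filter_subset _ _)) hind
      have hAdist : ∀ a ∈ A, G.dist r a = j := fun a ha => (Finset.mem_filter.mp ha).2
      rcases Nat.eq_zero_or_pos j with rfl | hjpos
      · exfalso
        have hsub : A ⊆ {r} := by
          intro a ha
          have : r = a := (hconn.dist_eq_zero_iff).mp (hAdist a ha)
          simp [← this]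
        have := Finset.card_le_card hsub
        simp only [Finset.card_singleton] at this
        omega
      · have hjle : j ≤ n - 2 := by
          have := Finset.mem_range.mp hjr
          omega
        have hmono : Stmt3Aux.svals n j ≤ S := Stmt3Aux.svals_mono hn2 hjle
        exact Stmt3Aux.main G hconn hn2 r j A hAind hAdist (le_trans hmono hjcard)
end

section
/- For every positive integer n there exists an integer N such that every connected graph G with matching number at least N contains an induced subgraph isomorphic to P_n, K_n, K_{n,n}, S_n^2, or F_n. -/
open SimpleGraph Finset

lemma hasInducedCopy_of_map {V W : Type*} (G : SimpleGraph V) (H : SimpleGraph W)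
    (f : W → V) (hinj : Function.Injective f)
    (hadj : ∀ a b, H.Adj a b ↔ G.Adj (f a) (f b)) : HasInducedCopy G H := by
  refine ⟨Set.range f, ⟨{ toEquiv := Equiv.ofInjective f hinj, map_rel_iff' := ?_ }⟩⟩
  intro a b
  change (G.induce _).Adj _ _ ↔ _
  simp only [SimpleGraph.induce, SimpleGraph.comap_adj, Equiv.ofInjective_apply]
  exact (hadj a b).symm

section Target
variable {V : Type} (G : SimpleGraph V) (n : ℕ)

def Target : Prop :=
  HasInducedCopy G (SimpleGraph.pathGraph n) ∨
  HasInducedCopy G (⊤ : SimpleGraph (Fin n)) ∨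
  HasInducedCopy G (completeBipartiteGraph (Fin n) (Fin n)) ∨
  HasInducedCopy G (Sgraph2 n) ∨
  HasInducedCopy G (Fgraph n)

variable {G n}

lemma target_clique (f : Fin n → V)
    (hadj : ∀ i j, i ≠ j → G.Adj (f i) (f j)) : Target G n := by
  refine Or.inr (Or.inl (hasInducedCopy_of_map G _ f ?_ ?_))
  · intro i j hfe
    by_contra hne
    exact G.irrefl (hfe ▸ hadj i j hne)
  · intro a b
    rw [SimpleGraph.top_adj]
    constructor
    · exact hadj a b
    · intro h hab
      exact G.irrefl (hab ▸ h)

lemma target_biclique (f g : Fin n → V)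
    (hf : Function.Injective f) (hg : Function.Injective g)
    (hfg : ∀ i j, f i ≠ g j)
    (hadj : ∀ i j, G.Adj (f i) (g j))
    (hff : ∀ i j, i ≠ j → ¬ G.Adj (f i) (f j))
    (hgg : ∀ i j, i ≠ j → ¬ G.Adj (g i) (g j)) : Target G n := by
  refine Or.inr (Or.inr (Or.inl (hasInducedCopy_of_map G _ (Sum.elim f g) ?_ ?_)))
  · rintro (i | i) (j | j) hfe <;> simp only [Sum.elim_inl, Sum.elim_inr] at hfe
    · rw [hf hfe]
    · exact absurd hfe (hfg i j)
    · exact absurd hfe.symm (hfg j i)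
    · rw [hg hfe]
  · rintro (i | i) (j | j)
    · refine iff_of_false (by simp) ?_
      intro h
      by_cases hij : i = j
      · exact absurd (hij ▸ h) (G.irrefl)
      · exact absurd h (hff i j hij)
    · exact iff_of_true (by simp) (hadj i j)
    · exact iff_of_true (by simp) (hadj j i).symm
    · refine iff_of_false (by simp) ?_
      intro h
      by_cases hij : i = j
      · exact absurd (hij ▸ h) (G.irrefl)
      · exact absurd h (hgg i j hij)
end Target

lemma target_spider {x : V} {f g : Fin n → V}
    (hxf : ∀ i, G.Adj x (f i))
    (hxg : ∀ i, ¬ G.Adj x (g i))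
    (hxgne : ∀ i, x ≠ g i)
    (hfg : ∀ i, G.Adj (f i) (g i))
    (hffn : ∀ i j, i ≠ j → ¬ G.Adj (f i) (f j))
    (hfgn : ∀ i j, i ≠ j → ¬ G.Adj (f i) (g j))
    (hggn : ∀ i j, i ≠ j → ¬ G.Adj (g i) (g j))
    (hfi : Function.Injective f) (hgi : Function.Injective g)
    (hfgne : ∀ i j, f i ≠ g j) : Target G n := by
  refine Or.inr (Or.inr (Or.inr (Or.inl
    (hasInducedCopy_of_map G _ (Sum.elim (fun _ => x) (Sum.elim f g)) ?_ ?_))))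
  · rintro (⟨⟩ | (i | i)) (⟨⟩ | (j | j)) hfe <;>
      simp only [Sum.elim_inl, Sum.elim_inr] at hfe
    · rfl
    · exact absurd hfe (G.ne_of_adj (hxf j))
    · exact absurd hfe (hxgne j)
    · exact absurd hfe.symm (G.ne_of_adj (hxf i))
    · rw [hfi hfe]
    · exact absurd hfe (hfgne i j)
    · exact absurd hfe.symm (hxgne i)
    · exact absurd hfe.symm (hfgne j i)
    · rw [hgi hfe]
  · rintro (⟨⟩ | (i | i)) (⟨⟩ | (j | j))
    · exact iff_of_false (by simp [Sgraph2]) (by simp)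
    · exact iff_of_true (by simp [Sgraph2]) (hxf j)
    · exact iff_of_false (by simp [Sgraph2]) (hxg j)
    · exact iff_of_true (by simp [Sgraph2]) (hxf i).symm
    · refine iff_of_false (by simp [Sgraph2]) ?_
      intro h
      by_cases hij : i = j
      · exact absurd (hij ▸ h) (G.irrefl)
      · exact absurd h (hffn i j hij)
    · rw [show ((Sgraph2 n).Adj (.inr (.inl i)) (.inr (.inr j)) ↔ i = j) from by simp [Sgraph2]]
      constructor
      · rintro rfl
        exact hfg i
      · intro h
        by_contra hij
        exact absurd h (hfgn i j hij)
    · exact iff_of_false (by simp [Sgraph2]) (fun h => hxg i h.symm)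
    · rw [show ((Sgraph2 n).Adj (.inr (.inr i)) (.inr (.inl j)) ↔ j = i) from by
        rw [SimpleGraph.adj_comm]; simp [Sgraph2]]
      constructor
      · rintro rfl
        exact (hfg j).symm
      · intro h
        by_contra hij
        exact absurd h.symm (hfgn j i hij)
    · refine iff_of_false (by simp [Sgraph2]) ?_
      intro h
      by_cases hij : i = j
      · exact absurd (hij ▸ h) (G.irrefl)
      · exact absurd h (hggn i j hij)

lemma target_friend {x : V} {f g : Fin n → V}
    (hxf : ∀ i, G.Adj x (f i))
    (hxg : ∀ i, G.Adj x (g i))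
    (hfg : ∀ i, G.Adj (f i) (g i))
    (hffn : ∀ i j, i ≠ j → ¬ G.Adj (f i) (f j))
    (hfgn : ∀ i j, i ≠ j → ¬ G.Adj (f i) (g j))
    (hggn : ∀ i j, i ≠ j → ¬ G.Adj (g i) (g j))
    (hfi : Function.Injective f) (hgi : Function.Injective g)
    (hfgne : ∀ i j, f i ≠ g j) : Target G n := by
  refine Or.inr (Or.inr (Or.inr (Or.inr
    (hasInducedCopy_of_map G _ (Sum.elim (fun _ => x) (Sum.elim f g)) ?_ ?_))))
  · rintro (⟨⟩ | (i | i)) (⟨⟩ | (j | j)) hfe <;>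
      simp only [Sum.elim_inl, Sum.elim_inr] at hfe
    · rfl
    · exact absurd hfe (G.ne_of_adj (hxf j))
    · exact absurd hfe (G.ne_of_adj (hxg j))
    · exact absurd hfe.symm (G.ne_of_adj (hxf i))
    · rw [hfi hfe]
    · exact absurd hfe (hfgne i j)
    · exact absurd hfe.symm (G.ne_of_adj (hxg i))
    · exact absurd hfe.symm (hfgne j i)
    · rw [hgi hfe]
  · rintro (⟨⟩ | (i | i)) (⟨⟩ | (j | j))
    · exact iff_of_false (by simp [Fgraph]) (by simp)
    · exact iff_of_true (by simp [Fgraph]) (hxf j)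
    · exact iff_of_true (by simp [Fgraph]) (hxg j)
    · exact iff_of_true (by simp [Fgraph]) (hxf i).symm
    · refine iff_of_false (by simp [Fgraph]) ?_
      intro h
      by_cases hij : i = j
      · exact absurd (hij ▸ h) (G.irrefl)
      · exact absurd h (hffn i j hij)
    · rw [show ((Fgraph n).Adj (.inr (.inl i)) (.inr (.inr j)) ↔ i = j) from by simp [Fgraph]]
      constructor
      · rintro rfl
        exact hfg i
      · intro h
        by_contra hij
        exact absurd h (hfgn i j hij)
    · exact iff_of_true (by simp [Fgraph]) (hxg i).symm
    · rw [show ((Fgraph n).Adj (.inr (.inr i)) (.inr (.inl j)) ↔ j = i) from by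
        rw [SimpleGraph.adj_comm]; simp [Fgraph]]
      constructor
      · rintro rfl
        exact (hfg j).symm
      · intro h
        by_contra hij
        exact absurd h.symm (hfgn j i hij)
    · refine iff_of_false (by simp [Fgraph]) ?_
      intro h
      by_cases hij : i = j
      · exact absurd (hij ▸ h) (G.irrefl)
      · exact absurd h (hggn i j hij)


lemma pre_ramsey (C : Type) [Fintype C] [Nonempty C] :
    ∀ L : ℕ, ∃ R : ℕ, ∀ (c : ℕ → ℕ → C) (s : Finset ℕ), R ≤ s.card →
      ∃ (xs : Fin L → ℕ) (g : Fin L → C), StrictMono xs ∧ (∀ i, xs i ∈ s) ∧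
        ∀ i j : Fin L, i < j → c (xs i) (xs j) = g i := by
  intro L
  induction L with
  | zero =>
    exact ⟨0, fun c s _ => ⟨Fin.elim0, Fin.elim0, fun i => i.elim0, fun i => i.elim0,
      fun i => i.elim0⟩⟩
  | succ L ih =>
    obtain ⟨R, hR⟩ := ih
    classical
    refine ⟨Fintype.card C * R + 1, fun c s hs => ?_⟩
    have hne : s.Nonempty := Finset.card_pos.mp (by omega)
    set x := s.min' hne with hx
    set s' := s.erase x with hs'def
    have hs' : Fintype.card C * R ≤ s'.card := by
      rw [hs'def, Finset.card_erase_of_mem (s.min'_mem hne)]; omega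
    obtain ⟨col, -, hcol⟩ := Finset.exists_le_card_fiber_of_mul_le_card_of_maps_to
      (t := (Finset.univ : Finset C)) (f := fun a => c x a)
      (fun a _ => Finset.mem_univ _) Finset.univ_nonempty (by simpa using hs')
    obtain ⟨xs, g, hmono, hmem, hcc⟩ := hR c _ hcol
    have hmemS : ∀ i, xs i ∈ s' := fun i => (Finset.mem_filter.mp (hmem i)).1
    have hxlt : ∀ i, x < xs i := by
      intro i
      have h1 := Finset.mem_of_mem_erase (hs'def ▸ hmemS i)
      have h2 : xs i ≠ x := Finset.ne_of_mem_erase (hs'def ▸ hmemS i)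
      exact lt_of_le_of_ne (s.min'_le _ h1) (Ne.symm h2)
    refine ⟨Fin.cons x xs, Fin.cons col g, ?_, ?_, ?_⟩
    · intro i j hij
      rcases Fin.eq_zero_or_eq_succ i with rfl | ⟨i', rfl⟩
      · rcases Fin.eq_zero_or_eq_succ j with rfl | ⟨j', rfl⟩
        · exact absurd hij (lt_irrefl _)
        · simp only [Fin.cons_zero, Fin.cons_succ]
          exact hxlt j'
      · rcases Fin.eq_zero_or_eq_succ j with rfl | ⟨j', rfl⟩
        · exact absurd hij (by simp [Fin.lt_iff_val_lt_val])
        · simp only [Fin.cons_succ]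
          exact hmono (Fin.succ_lt_succ_iff.mp hij)
    · intro i
      rcases Fin.eq_zero_or_eq_succ i with rfl | ⟨i', rfl⟩
      · simpa using s.min'_mem hne
      · simpa using Finset.mem_of_mem_erase (hs'def ▸ hmemS i')
    · intro i j hij
      rcases Fin.eq_zero_or_eq_succ i with rfl | ⟨i', rfl⟩
      · rcases Fin.eq_zero_or_eq_succ j with rfl | ⟨j', rfl⟩
        · exact absurd hij (lt_irrefl _)
        · simp only [Fin.cons_zero, Fin.cons_succ]
          exact (Finset.mem_filter.mp (hmem j')).2
      · rcases Fin.eq_zero_or_eq_succ j with rfl | ⟨j', rfl⟩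
        · exact absurd hij (by simp [Fin.lt_iff_val_lt_val])
        · simp only [Fin.cons_succ]
          exact hcc i' j' (Fin.succ_lt_succ_iff.mp hij)

lemma my_ramsey (C : Type) [Fintype C] [Nonempty C] (m : ℕ) :
    ∃ R : ℕ, ∀ (c : ℕ → ℕ → C) (s : Finset ℕ), R ≤ s.card →
      ∃ (t : Finset ℕ) (col : C), t ⊆ s ∧ m ≤ t.card ∧
        ∀ a ∈ t, ∀ b ∈ t, a < b → c a b = col := by
  classical
  obtain ⟨R, hR⟩ := pre_ramsey C (Fintype.card C * m + 1)
  refine ⟨R, fun c s hs => ?_⟩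
  obtain ⟨xs, g, hmono, hmem, hcc⟩ := hR c s hs
  obtain ⟨col, -, hcol⟩ := Finset.exists_le_card_fiber_of_mul_le_card_of_maps_to
    (s := (Finset.univ : Finset (Fin (Fintype.card C * m + 1))))
    (t := (Finset.univ : Finset C)) (f := g)
    (n := m) (fun a _ => Finset.mem_univ _) Finset.univ_nonempty (by simp)
  refine ⟨(Finset.univ.filter (fun i => g i = col)).image xs, col, ?_, ?_, ?_⟩
  · intro a ha
    obtain ⟨i, -, rfl⟩ := Finset.mem_image.mp ha
    exact hmem i
  · rwa [Finset.card_image_of_injective _ hmono.injective]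
  · intro a ha b hb hab
    obtain ⟨i, hi, rfl⟩ := Finset.mem_image.mp ha
    obtain ⟨j, hj, rfl⟩ := Finset.mem_image.mp hb
    have hij : i < j := by
      rcases lt_trichotomy i j with h | rfl | h
      · exact h
      · exact absurd hab (lt_irrefl _)
      · exact absurd (hmono h) (by omega)
    rw [hcc i j hij, (Finset.mem_filter.mp hi).2]



lemma walk_split {V : Type*} {G : SimpleGraph V} :
    ∀ {u v : V} (p : G.Walk u v) (i : ℕ), i ≤ p.length →
      ∃ (q : G.Walk u (p.getVert i)) (r : G.Walk (p.getVert i) v),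
        q.length = i ∧ r.length = p.length - i := by
  intro u v p
  induction p with
  | nil =>
    intro i hi
    have : i = 0 := by simpa using hi
    subst this
    exact ⟨Walk.nil.copy rfl (Walk.getVert_zero _).symm,
      Walk.nil.copy (Walk.getVert_zero _).symm rfl, by simp, by simp⟩
  | @cons a b c h p ih =>
    intro i hi
    cases i with
    | zero =>
      exact ⟨Walk.nil.copy rfl (Walk.getVert_zero _).symm,
        (Walk.cons h p).copy (Walk.getVert_zero _).symm rfl, by simp, by simp⟩
    | succ i =>
      obtain ⟨q, r, hq, hr⟩ := ih i (by simpa [Walk.length_cons] using hi)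
      refine ⟨(Walk.cons h q).copy rfl (Walk.getVert_cons_succ p h).symm,
        r.copy (Walk.getVert_cons_succ p h).symm rfl, ?_, ?_⟩
      · simp [hq]
      · simp only [Walk.length_copy, Walk.length_cons, hr]
        omega

lemma shorter_of_eq {V : Type*} {G : SimpleGraph V} {u v : V} (p : G.Walk u v) (i j : ℕ)
    (hij : i < j) (hj : j ≤ p.length) (he : p.getVert i = p.getVert j) :
    ∃ q : G.Walk u v, q.length + j = p.length + i := by
  obtain ⟨q, -, hq, -⟩ := walk_split p i (le_trans (le_of_lt hij) hj)
  obtain ⟨-, r, -, hr⟩ := walk_split p j hj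
  exact ⟨q.append (r.copy he.symm rfl), by simp [hq, hr]; omega⟩

lemma shorter_of_adj {V : Type*} {G : SimpleGraph V} {u v : V} (p : G.Walk u v) (i j : ℕ)
    (hij : i < j) (hj : j ≤ p.length) (he : G.Adj (p.getVert i) (p.getVert j)) :
    ∃ q : G.Walk u v, q.length + j = p.length + i + 1 := by
  obtain ⟨q, -, hq, -⟩ := walk_split p i (le_trans (le_of_lt hij) hj)
  obtain ⟨-, r, -, hr⟩ := walk_split p j hj
  exact ⟨q.append (Walk.cons he r), by simp [hq, hr]; omega⟩

lemma exists_min_walk {V : Type*} {G : SimpleGraph V} {u v : V} (h : G.Reachable u v) :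
    ∃ p : G.Walk u v, ∀ q : G.Walk u v, p.length ≤ q.length := by
  classical
  have hex : ∃ k, ∃ q : G.Walk u v, q.length = k := ⟨h.some.length, h.some, rfl⟩
  obtain ⟨p, hp⟩ := Nat.find_spec hex
  exact ⟨p, fun q => hp ▸ Nat.find_min' hex ⟨q, rfl⟩⟩

lemma short_or_path {V : Type*} {G : SimpleGraph V} (n : ℕ) {u v : V} (h : G.Reachable u v) :
    (∃ w : G.Walk u v, w.length + 2 ≤ n) ∨ HasInducedCopy G (SimpleGraph.pathGraph n) := by
  obtain ⟨p, hmin⟩ := exists_min_walk h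
  by_cases hshort : p.length + 2 ≤ n
  · exact Or.inl ⟨p, hshort⟩
  right
  have hn : n ≤ p.length + 1 := by omega
  set f : Fin n → V := fun i => p.getVert i with hf
  have key : ∀ i j : Fin n, i < j → (G.Adj (f i) (f j) ↔ (i : ℕ) + 1 = (j : ℕ)) := by
    intro i j hij
    constructor
    · intro hadj
      by_contra hne
      have h2 : (i : ℕ) + 1 < (j : ℕ) := by
        have := Fin.lt_iff_val_lt_val.mp hij; omega
      obtain ⟨q, hq⟩ := shorter_of_adj p i j (by omega) (by omega) hadj
      have := hmin q; omega
    · intro he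
      have h2 := p.adj_getVert_succ (i := (i:ℕ)) (by omega)
      show G.Adj (p.getVert (i:ℕ)) (p.getVert (j:ℕ))
      rw [← he]
      exact h2
  have hinj : Function.Injective f := by
    intro i j hfe
    by_contra hne
    rcases lt_or_gt_of_ne hne with hij | hij
    · obtain ⟨q, hq⟩ := shorter_of_eq p i j (Fin.lt_iff_val_lt_val.mp hij) (by omega) hfe
      have := hmin q
      have := Fin.lt_iff_val_lt_val.mp hij; omega
    · obtain ⟨q, hq⟩ := shorter_of_eq p j i (Fin.lt_iff_val_lt_val.mp hij) (by omega) hfe.symm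
      have := hmin q
      have := Fin.lt_iff_val_lt_val.mp hij; omega
  refine hasInducedCopy_of_map G _ f hinj ?_
  intro a b
  rw [SimpleGraph.pathGraph_adj]
  rcases lt_trichotomy a b with hab | rfl | hab
  · rw [key a b hab]
    have hv := Fin.lt_iff_val_lt_val.mp hab
    constructor
    · intro h
      rcases h with h | h
      · exact h
      · omega
    · intro h
      exact Or.inl h
  · simp
  · rw [adj_comm, key b a hab]
    have hv := Fin.lt_iff_val_lt_val.mp hab
    constructor
    · intro h
      rcases h with h | h
      · omega
      · exact h
    · intro h
      exact Or.inr h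
  -- penultimate vertex decomposition
lemma walk_penult {V : Type*} {G : SimpleGraph V} :
    ∀ {a b : V} (w : G.Walk a b) (k : ℕ), w.length = k + 1 →
      ∃ (c : V) (_ : G.Adj c b) (w' : G.Walk a c), w'.length = k := by
  intro a b w
  induction w with
  | nil => intro k hk; simp at hk
  | @cons a x b h p ih =>
    intro k hk
    cases k with
    | zero =>
      have : p.length = 0 := by simpa using hk
      have hxb : x = b := Walk.eq_of_length_eq_zero this
      subst hxb
      exact ⟨a, h, Walk.nil, rfl⟩
    | succ k =>
      obtain ⟨c, hc, w', hw'⟩ := ih k (by simpa using hk)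
      exact ⟨c, hc, Walk.cons h w', by simp [hw']⟩


section IMF
variable {V : Type} (G : SimpleGraph V)

/-- induced matching family on index set `s` -/
def IMF (E : ℕ → V × V) (s : Finset ℕ) : Prop :=
  (∀ i ∈ s, G.Adj (E i).1 (E i).2) ∧
  ∀ i ∈ s, ∀ j ∈ s, i ≠ j →
    ¬G.Adj (E i).1 (E j).1 ∧ ¬G.Adj (E i).1 (E j).2 ∧
    ¬G.Adj (E i).2 (E j).1 ∧ ¬G.Adj (E i).2 (E j).2

variable {G}

lemma IMF.subset {E : ℕ → V × V} {s t : Finset ℕ} (h : IMF G E s) (hts : t ⊆ s) :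
    IMF G E t :=
  ⟨fun i hi => h.1 i (hts hi), fun i hi j hj => h.2 i (hts hi) j (hts hj)⟩

lemma IMF.nd {E : ℕ → V × V} {s : Finset ℕ} (h : IMF G E s) :
    ∀ i ∈ s, ∀ j ∈ s, i ≠ j →
      (E i).1 ≠ (E j).1 ∧ (E i).1 ≠ (E j).2 ∧ (E i).2 ≠ (E j).1 ∧ (E i).2 ≠ (E j).2 := by
  intro i hi j hj hij
  have hai := h.1 i hi
  have haj := h.1 j hj
  obtain ⟨h11, h12, h21, h22⟩ := h.2 i hi j hj hij
  refine ⟨?_, ?_, ?_, ?_⟩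
  · intro he
    exact h12 (he ▸ haj)
  · intro he
    exact h11 (by rw [he]; exact haj.symm)
  · intro he
    exact h22 (he ▸ haj)
  · intro he
    exact h21 (by rw [he]; exact haj.symm)

lemma IMF.swap {E E' : ℕ → V × V} {s : Finset ℕ} (h : IMF G E s)
    (hE' : ∀ i ∈ s, E' i = E i ∨ E' i = ((E i).2, (E i).1)) : IMF G E' s := by
  constructor
  · intro i hi
    rcases hE' i hi with he | he <;> rw [he]
    · exact h.1 i hi
    · exact (h.1 i hi).symm
  · intro i hi j hj hij
    obtain ⟨h11, h12, h21, h22⟩ := h.2 i hi j hj hij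
    rcases hE' i hi with he | he <;> rcases hE' j hj with he' | he' <;>
      rw [he, he'] <;> exact ⟨by assumption, by assumption, by assumption, by assumption⟩
end IMF

section LemC
variable {V : Type} {G : SimpleGraph V}

lemma lemC {n : ℕ} {E : ℕ → V × V} {s : Finset ℕ} (himf : IMF G E s) (y : V)
    (hy1 : ∀ i ∈ s, G.Adj y (E i).1)
    (hy2 : ∀ i ∈ s, y ≠ (E i).1 ∧ y ≠ (E i).2)
    (hcard : 2 * n ≤ s.card) : Target G n := by
  classical
  set s1 := s.filter (fun i => G.Adj y (E i).2) with hs1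
  set s2 := s.filter (fun i => ¬ G.Adj y (E i).2) with hs2
  have hsum : s1.card + s2.card = s.card := Finset.card_filter_add_card_filter_not _
  have hbig : n ≤ s1.card ∨ n ≤ s2.card := by omega
  -- common setup: given t ⊆ s with card = n, enumerate
  rcases hbig with hb | hb
  · -- friendship
    obtain ⟨t, hts, htc⟩ := Finset.exists_subset_card_eq hb
    have htss : t ⊆ s := hts.trans (Finset.filter_subset _ _)
    set σ : Fin n ≃o {x // x ∈ t} := t.orderIsoOfFin htc with hσ
    have hmem : ∀ i : Fin n, ((σ i : ℕ)) ∈ s := fun i => htss (σ i).2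
    have hmem1 : ∀ i : Fin n, ((σ i : ℕ)) ∈ s1 := fun i => hts (σ i).2
    have hinj : ∀ i j : Fin n, i ≠ j → ((σ i : ℕ)) ≠ ((σ j : ℕ)) := by
      intro i j hij he
      exact hij (σ.injective (Subtype.ext he))
    refine target_friend (x := y) (f := fun i => (E (σ i)).1) (g := fun i => (E (σ i)).2)
      (fun i => hy1 _ (hmem i)) ?_ (fun i => himf.1 _ (hmem i)) ?_ ?_ ?_ ?_ ?_ ?_
    · intro i
      exact (Finset.mem_filter.mp (hmem1 i)).2
    · intro i j hij
      exact (himf.2 _ (hmem i) _ (hmem j) (hinj i j hij)).1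
    · intro i j hij
      exact (himf.2 _ (hmem i) _ (hmem j) (hinj i j hij)).2.1
    · intro i j hij
      exact (himf.2 _ (hmem i) _ (hmem j) (hinj i j hij)).2.2.2
    · intro i j he
      by_contra hij
      exact (himf.nd _ (hmem i) _ (hmem j) (hinj i j hij)).1 he
    · intro i j he
      by_contra hij
      exact (himf.nd _ (hmem i) _ (hmem j) (hinj i j hij)).2.2.2 he
    · intro i j he
      by_cases hij : i = j
      · subst hij
        exact (himf.1 _ (hmem i)).ne he
      · exact (himf.nd _ (hmem i) _ (hmem j) (hinj i j hij)).2.1 he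
  · -- spider
    obtain ⟨t, hts, htc⟩ := Finset.exists_subset_card_eq hb
    have htss : t ⊆ s := hts.trans (Finset.filter_subset _ _)
    set σ : Fin n ≃o {x // x ∈ t} := t.orderIsoOfFin htc with hσ
    have hmem : ∀ i : Fin n, ((σ i : ℕ)) ∈ s := fun i => htss (σ i).2
    have hmem2 : ∀ i : Fin n, ((σ i : ℕ)) ∈ s2 := fun i => hts (σ i).2
    have hinj : ∀ i j : Fin n, i ≠ j → ((σ i : ℕ)) ≠ ((σ j : ℕ)) := by
      intro i j hij he
      exact hij (σ.injective (Subtype.ext he))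
    refine target_spider (x := y) (f := fun i => (E (σ i)).1) (g := fun i => (E (σ i)).2)
      (fun i => hy1 _ (hmem i)) ?_ (fun i => (hy2 _ (hmem i)).2)
      (fun i => himf.1 _ (hmem i)) ?_ ?_ ?_ ?_ ?_ ?_
    · intro i
      exact (Finset.mem_filter.mp (hmem2 i)).2
    · intro i j hij
      exact (himf.2 _ (hmem i) _ (hmem j) (hinj i j hij)).1
    · intro i j hij
      exact (himf.2 _ (hmem i) _ (hmem j) (hinj i j hij)).2.1
    · intro i j hij
      exact (himf.2 _ (hmem i) _ (hmem j) (hinj i j hij)).2.2.2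
    · intro i j he
      by_contra hij
      exact (himf.nd _ (hmem i) _ (hmem j) (hinj i j hij)).1 he
    · intro i j he
      by_contra hij
      exact (himf.nd _ (hmem i) _ (hmem j) (hinj i j hij)).2.2.2 he
    · intro i j he
      by_cases hij : i = j
      · subst hij
        exact (himf.1 _ (hmem i)).ne he
      · exact (himf.nd _ (hmem i) _ (hmem j) (hinj i j hij)).2.1 he
end LemC

section Enum
lemma enum_one (t : Finset ℕ) (n : ℕ) (h : n ≤ t.card) :
    ∃ a : Fin n → ℕ, (∀ i, a i ∈ t) ∧ StrictMono a := by
  set σ := t.orderIsoOfFin rfl with hσ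
  refine ⟨fun i => σ ⟨i, by omega⟩, fun i => (σ _).2, ?_⟩
  intro i j hij
  have : (⟨(i : ℕ), by omega⟩ : Fin t.card) < ⟨(j : ℕ), by omega⟩ := by
    simp only [Fin.mk_lt_mk]
    exact hij
  exact Subtype.coe_lt_coe.mpr (σ.lt_iff_lt.mpr this)

lemma enum_pair (t : Finset ℕ) (n : ℕ) (h : 2 * n ≤ t.card) :
    ∃ (a b : Fin n → ℕ), (∀ i, a i ∈ t) ∧ (∀ i, b i ∈ t) ∧
      (∀ i j, a i < b j) ∧ StrictMono a ∧ StrictMono b := by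
  set σ := t.orderIsoOfFin rfl with hσ
  have hlt : ∀ (x y : Fin t.card), x < y → (σ x : ℕ) < (σ y : ℕ) :=
    fun x y hxy => Subtype.coe_lt_coe.mpr (σ.lt_iff_lt.mpr hxy)
  refine ⟨fun i => σ ⟨i, by omega⟩, fun j => σ ⟨t.card - n + j, by omega⟩,
    fun i => (σ _).2, fun j => (σ _).2, ?_, ?_, ?_⟩
  · intro i j
    refine hlt _ _ ?_
    simp only [Fin.lt_iff_val_lt_val]
    omega
  · intro i j hij
    refine hlt _ _ ?_
    simp only [Fin.lt_iff_val_lt_val]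
    exact hij
  · intro i j hij
    refine hlt _ _ ?_
    simp only [Fin.lt_iff_val_lt_val]
    have : (i : ℕ) < (j : ℕ) := hij
    omega
end Enum

section Phase1

/-- pairwise vertex-disjoint matching family -/
def PWD {V : Type} (G : SimpleGraph V) (E : ℕ → V × V) (s : Finset ℕ) : Prop :=
  (∀ i ∈ s, G.Adj (E i).1 (E i).2) ∧
  ∀ i ∈ s, ∀ j ∈ s, i ≠ j →
    (E i).1 ≠ (E j).1 ∧ (E i).1 ≠ (E j).2 ∧ (E i).2 ≠ (E j).1 ∧ (E i).2 ≠ (E j).2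

lemma phase1 (n m : ℕ) : ∃ N : ℕ, ∀ (V : Type) (G : SimpleGraph V) (E : ℕ → V × V) (s : Finset ℕ),
    PWD G E s → N ≤ s.card →
    Target G n ∨ ∃ t ⊆ s, m ≤ t.card ∧ IMF G E t := by
  classical
  set M := max (max n (2 * n)) m with hM
  obtain ⟨R, hR⟩ := my_ramsey (Bool × Bool × Bool × Bool) M
  refine ⟨R, fun V G E s hpwd hs => ?_⟩
  set c : ℕ → ℕ → Bool × Bool × Bool × Bool := fun a b =>
    (decide (G.Adj (E a).1 (E b).1), decide (G.Adj (E a).1 (E b).2),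
     decide (G.Adj (E a).2 (E b).1), decide (G.Adj (E a).2 (E b).2)) with hc
  obtain ⟨t, col, hts, htc, hmono⟩ := hR c s hs
  obtain ⟨b1, b2, b3, b4⟩ := col
  have h1 : ∀ a ∈ t, ∀ b ∈ t, a < b → decide (G.Adj (E a).1 (E b).1) = b1 :=
    fun a ha b hb hab => congrArg (fun p => p.1) (hmono a ha b hb hab)
  have h2 : ∀ a ∈ t, ∀ b ∈ t, a < b → decide (G.Adj (E a).1 (E b).2) = b2 :=
    fun a ha b hb hab => congrArg (fun p => p.2.1) (hmono a ha b hb hab)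
  have h3 : ∀ a ∈ t, ∀ b ∈ t, a < b → decide (G.Adj (E a).2 (E b).1) = b3 :=
    fun a ha b hb hab => congrArg (fun p => p.2.2.1) (hmono a ha b hb hab)
  have h4 : ∀ a ∈ t, ∀ b ∈ t, a < b → decide (G.Adj (E a).2 (E b).2) = b4 :=
    fun a ha b hb hab => congrArg (fun p => p.2.2.2) (hmono a ha b hb hab)
  have hnd := fun (a : ℕ) ha b hb hab => hpwd.2 a (hts ha) b (hts hb) hab
  cases b1 with
  | true =>
    -- clique on first coordinates
    left
    obtain ⟨a, hat, hamono⟩ := enum_one t n (by omega)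
    refine target_clique (f := fun i => (E (a i)).1) ?_
    intro i j hij
    rcases lt_or_gt_of_ne hij with h | h
    · exact of_decide_eq_true (h1 _ (hat i) _ (hat j) (hamono h))
    · exact (of_decide_eq_true (h1 _ (hat j) _ (hat i) (hamono h))).symm
  | false =>
  cases b4 with
  | true =>
    left
    obtain ⟨a, hat, hamono⟩ := enum_one t n (by omega)
    refine target_clique (f := fun i => (E (a i)).2) ?_
    intro i j hij
    rcases lt_or_gt_of_ne hij with h | h
    · exact of_decide_eq_true (h4 _ (hat i) _ (hat j) (hamono h))
    · exact (of_decide_eq_true (h4 _ (hat j) _ (hat i) (hamono h))).symm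
  | false =>
  have hb1 : ∀ a ∈ t, ∀ b ∈ t, a ≠ b → ¬ G.Adj (E a).1 (E b).1 := by
    intro a ha b hb hab
    rcases lt_or_gt_of_ne hab with h | h
    · exact of_decide_eq_false (h1 _ ha _ hb h)
    · intro hadj
      exact of_decide_eq_false (h1 _ hb _ ha h) hadj.symm
  have hb4 : ∀ a ∈ t, ∀ b ∈ t, a ≠ b → ¬ G.Adj (E a).2 (E b).2 := by
    intro a ha b hb hab
    rcases lt_or_gt_of_ne hab with h | h
    · exact of_decide_eq_false (h4 _ ha _ hb h)
    · intro hadj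
      exact of_decide_eq_false (h4 _ hb _ ha h) hadj.symm
  cases b2 with
  | true =>
    -- half graph: (E a).1 ~ (E b).2 for a < b
    left
    obtain ⟨a, b, hat, hbt, hab, hamono, hbmono⟩ := enum_pair t n (by omega)
    refine target_biclique (f := fun i => (E (a i)).1) (g := fun j => (E (b j)).2)
      ?_ ?_ ?_ ?_ ?_ ?_
    · intro i j hij
      by_contra hne
      have hanb : a i ≠ a j := fun he => hne (hamono.injective he)
      exact (hnd _ (hat i) _ (hat j) hanb).1 hij
    · intro i j hij
      by_contra hne
      have hanb : b i ≠ b j := fun he => hne (hbmono.injective he)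
      exact (hnd _ (hbt i) _ (hbt j) hanb).2.2.2 hij
    · intro i j
      exact (hnd _ (hat i) _ (hbt j) (Nat.ne_of_lt (hab i j))).2.1
    · intro i j
      exact of_decide_eq_true (h2 _ (hat i) _ (hbt j) (hab i j))
    · intro i j hij
      exact hb1 _ (hat i) _ (hat j) (fun he => hij (hamono.injective he))
    · intro i j hij
      exact hb4 _ (hbt i) _ (hbt j) (fun he => hij (hbmono.injective he))
  | false =>
  cases b3 with
  | true =>
    -- half graph: (E a).2 ~ (E b).1 for a < b
    left
    obtain ⟨a, b, hat, hbt, hab, hamono, hbmono⟩ := enum_pair t n (by omega)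
    refine target_biclique (f := fun i => (E (a i)).2) (g := fun j => (E (b j)).1)
      ?_ ?_ ?_ ?_ ?_ ?_
    · intro i j hij
      by_contra hne
      have hanb : a i ≠ a j := fun he => hne (hamono.injective he)
      exact (hnd _ (hat i) _ (hat j) hanb).2.2.2 hij
    · intro i j hij
      by_contra hne
      have hanb : b i ≠ b j := fun he => hne (hbmono.injective he)
      exact (hnd _ (hbt i) _ (hbt j) hanb).1 hij
    · intro i j
      exact (hnd _ (hat i) _ (hbt j) (Nat.ne_of_lt (hab i j))).2.2.1
    · intro i j
      exact of_decide_eq_true (h3 _ (hat i) _ (hbt j) (hab i j))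
    · intro i j hij
      exact hb4 _ (hat i) _ (hat j) (fun he => hij (hamono.injective he))
    · intro i j hij
      exact hb1 _ (hbt i) _ (hbt j) (fun he => hij (hbmono.injective he))
  | false =>
  -- all false: induced matching
  right
  refine ⟨t, hts, by omega, ⟨fun i hi => hpwd.1 i (hts hi), ?_⟩⟩
  intro i hi j hj hij
  have hb2 : ¬ G.Adj (E i).1 (E j).2 := by
    rcases lt_or_gt_of_ne hij with h | h
    · exact of_decide_eq_false (h2 _ hi _ hj h)
    · intro hadj
      exact of_decide_eq_false (h3 _ hj _ hi h) hadj.symm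
  have hb3 : ¬ G.Adj (E i).2 (E j).1 := by
    rcases lt_or_gt_of_ne hij with h | h
    · exact of_decide_eq_false (h3 _ hi _ hj h)
    · intro hadj
      exact of_decide_eq_false (h2 _ hj _ hi h) hadj.symm
  exact ⟨hb1 _ hi _ hj hij, hb2, hb3, hb4 _ hi _ hj hij⟩
end Phase1

section MainRec

lemma mainrec (n : ℕ) : ∀ d : ℕ, ∃ m : ℕ,
    ∀ (V : Type) (G : SimpleGraph V) (x : V) (E : ℕ → V × V) (s : Finset ℕ),
      IMF G E s → (∀ i ∈ s, ∃ w : G.Walk x (E i).1, w.length ≤ d) → m ≤ s.card →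
      Target G n := by
  intro d
  induction d with
  | zero =>
    refine ⟨2, fun V G x E s himf hwalk hcard => ?_⟩
    have h2 : 1 < s.card := by omega
    obtain ⟨i, hi, j, hj, hij⟩ := Finset.one_lt_card.mp h2
    obtain ⟨wi, hwi⟩ := hwalk i hi
    obtain ⟨wj, hwj⟩ := hwalk j hj
    have hxi : x = (E i).1 := SimpleGraph.Walk.eq_of_length_eq_zero (Nat.le_zero.mp hwi)
    have hxj : x = (E j).1 := SimpleGraph.Walk.eq_of_length_eq_zero (Nat.le_zero.mp hwj)
    exact absurd (hxi.symm.trans hxj) (himf.nd i hi j hj hij).1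
  | succ d ih =>
    obtain ⟨md, hmd⟩ := ih
    classical
    set M := max (max n (2 * n)) md with hMdef
    obtain ⟨R, hR⟩ := my_ramsey (Bool × Bool × Bool × Bool × Bool) M
    refine ⟨md + 2 * n * (R + 1) + 1, fun V G x E s himf hwalk hcard => ?_⟩
    set P : ℕ → Prop := fun i =>
      (∃ w : G.Walk x (E i).1, w.length ≤ d) ∨ (∃ w : G.Walk x (E i).2, w.length ≤ d) with hP
    set A := s.filter P with hAdef
    set B := s.filter (fun i => ¬ P i) with hBdef
    have hsum : A.card + B.card = s.card :=
      Finset.card_filter_add_card_filter_not _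
    by_cases hAc : md ≤ A.card
    · -- recurse on A after reorienting each edge toward x
      set E' : ℕ → V × V := fun i =>
        if (∃ w : G.Walk x (E i).1, w.length ≤ d) then E i else ((E i).2, (E i).1) with hE'
      have himf' : IMF G E' A := by
        refine (himf.subset (Finset.filter_subset _ _)).swap ?_
        intro i _
        by_cases h : (∃ w : G.Walk x (E i).1, w.length ≤ d)
        · left; simp [hE', if_pos h]
        · right; simp [hE', if_neg h]
      refine hmd V G x E' A himf' ?_ hAc
      intro i hi
      have hPi : P i := (Finset.mem_filter.mp hi).2
      by_cases h : (∃ w : G.Walk x (E i).1, w.length ≤ d)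
      · have he : E' i = E i := by simp only [hE']; exact if_pos h
        rw [he]
        exact h
      · have he : E' i = ((E i).2, (E i).1) := by simp only [hE']; exact if_neg h
        rw [he]
        exact hPi.resolve_left h
    · -- B is big
      have hBc : 2 * n * (R + 1) + 1 ≤ B.card := by omega
      have hBs : B ⊆ s := Finset.filter_subset _ _
      have noshort1 : ∀ i ∈ B, ¬ ∃ w : G.Walk x (E i).1, w.length ≤ d :=
        fun i hi h => (Finset.mem_filter.mp hi).2 (Or.inl h)
      have noshort2 : ∀ i ∈ B, ¬ ∃ w : G.Walk x (E i).2, w.length ≤ d :=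
        fun i hi h => (Finset.mem_filter.mp hi).2 (Or.inr h)
      have hgy : ∀ i, ∃ yv : V, i ∈ B →
          ((∃ w : G.Walk x yv, w.length ≤ d) ∧ G.Adj yv (E i).1) := by
        intro i
        by_cases hi : i ∈ B
        · obtain ⟨w, hw⟩ := hwalk i (hBs hi)
          have hlen : w.length = d + 1 := by
            rcases Nat.lt_or_ge w.length (d + 1) with h | h
            · exact absurd (Or.inl ⟨w, by omega⟩) (Finset.mem_filter.mp hi).2
            · omega
          obtain ⟨c0, hc0, w', hw'⟩ := walk_penult w d hlen
          exact ⟨c0, fun _ => ⟨⟨w', le_of_eq hw'⟩, hc0⟩⟩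
        · exact ⟨x, fun h => absurd h hi⟩
      choose y hy using hgy
      have hyshort : ∀ a ∈ B, ∃ w : G.Walk x (y a), w.length ≤ d := fun a ha => (hy a ha).1
      have hyadj : ∀ a ∈ B, G.Adj (y a) (E a).1 := fun a ha => (hy a ha).2
      have hne1 : ∀ a ∈ B, ∀ b ∈ B, y a ≠ (E b).1 := by
        intro a ha b hb he
        obtain ⟨w, hw⟩ := hyshort a ha
        exact noshort1 b hb ⟨w.copy rfl he, by simpa using hw⟩
      have hne2 : ∀ a ∈ B, ∀ b ∈ B, y a ≠ (E b).2 := by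
        intro a ha b hb he
        obtain ⟨w, hw⟩ := hyshort a ha
        exact noshort2 b hb ⟨w.copy rfl he, by simpa using hw⟩
      by_cases hfib : ∃ v ∈ B.image y, 2 * n ≤ (B.filter (fun i => y i = v)).card
      · -- a popular neighbor: spider or friendship
        obtain ⟨v, hv, hvc⟩ := hfib
        set B' := B.filter (fun i => y i = v) with hB'
        have hB'B : B' ⊆ B := Finset.filter_subset _ _
        obtain ⟨i0, hi0, hyi0⟩ := Finset.mem_image.mp hv
        refine lemC (himf.subset (hB'B.trans hBs)) v ?_ ?_ hvc
        · intro i hi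
          have := hyadj i (hB'B hi)
          rwa [(Finset.mem_filter.mp hi).2] at this
        · intro i hi
          constructor
          · intro he
            exact hne1 i0 hi0 i (hB'B hi) (hyi0.trans he)
          · intro he
            exact hne2 i0 hi0 i (hB'B hi) (hyi0.trans he)
      · -- all fibers small: many distinct neighbors, Ramsey
        push_neg at hfib
        have himgc : R ≤ (B.image y).card := by
          have hle := Finset.card_le_mul_card_image (s := B) (f := y) (2 * n)
            (fun b hb => le_of_lt (hfib b hb))
          by_contra hc2
          push_neg at hc2
          have h3 : (B.image y).card ≤ R := by omega
          have : B.card ≤ 2 * n * R := hle.trans (Nat.mul_le_mul_left _ h3)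
          have h4 : 2 * n * (R + 1) = 2 * n * R + 2 * n := by ring
          omega
        set sec : V → ℕ := fun v => if h : ∃ i ∈ B, y i = v then h.choose else 0 with hsec
        have hsecp : ∀ v ∈ B.image y, sec v ∈ B ∧ y (sec v) = v := by
          intro v hv
          obtain ⟨i, hi, he⟩ := Finset.mem_image.mp hv
          have hex : ∃ i ∈ B, y i = v := ⟨i, hi, he⟩
          simp only [hsec, dif_pos hex]
          exact ⟨hex.choose_spec.1, hex.choose_spec.2⟩
        set J := (B.image y).image sec with hJ
        have hJB : J ⊆ B := by
          intro a ha
          obtain ⟨v, hv, rfl⟩ := Finset.mem_image.mp ha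
          exact (hsecp v hv).1
        have hyinJ : ∀ a ∈ J, ∀ b ∈ J, y a = y b → a = b := by
          intro a ha b hb he
          obtain ⟨v, hv, rfl⟩ := Finset.mem_image.mp ha
          obtain ⟨w, hw, rfl⟩ := Finset.mem_image.mp hb
          rw [(hsecp v hv).2, (hsecp w hw).2] at he
          rw [he]
        have hJcard : R ≤ J.card := by
          rw [hJ, Finset.card_image_of_injOn]
          · exact himgc
          · intro v hv w hw he
            have h1 := (hsecp v hv).2
            have h2 := (hsecp w hw).2
            rw [← h1, ← h2, he]
        set c : ℕ → ℕ → Bool × Bool × Bool × Bool × Bool := fun a b =>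
          (decide (G.Adj (y a) (y b)), decide (G.Adj (y a) (E b).1),
           decide (G.Adj (E a).1 (y b)), decide (G.Adj (y a) (E b).2),
           decide (G.Adj (E a).2 (y b))) with hc
        obtain ⟨t, col, htJ, htc, hmono⟩ := hR c J hJcard
        obtain ⟨b1, b2, b3, b4, b5⟩ := col
        have htB : t ⊆ B := htJ.trans hJB
        have htS : t ⊆ s := htB.trans hBs
        have h1 : ∀ a ∈ t, ∀ b ∈ t, a < b → decide (G.Adj (y a) (y b)) = b1 :=
          fun a ha b hb hab => congrArg (fun p => p.1) (hmono a ha b hb hab)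
        have h2 : ∀ a ∈ t, ∀ b ∈ t, a < b → decide (G.Adj (y a) (E b).1) = b2 :=
          fun a ha b hb hab => congrArg (fun p => p.2.1) (hmono a ha b hb hab)
        have h3 : ∀ a ∈ t, ∀ b ∈ t, a < b → decide (G.Adj (E a).1 (y b)) = b3 :=
          fun a ha b hb hab => congrArg (fun p => p.2.2.1) (hmono a ha b hb hab)
        have h4 : ∀ a ∈ t, ∀ b ∈ t, a < b → decide (G.Adj (y a) (E b).2) = b4 :=
          fun a ha b hb hab => congrArg (fun p => p.2.2.2.1) (hmono a ha b hb hab)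
        have h5 : ∀ a ∈ t, ∀ b ∈ t, a < b → decide (G.Adj (E a).2 (y b)) = b5 :=
          fun a ha b hb hab => congrArg (fun p => p.2.2.2.2) (hmono a ha b hb hab)
        have hnd := fun (a : ℕ) ha b hb hab => himf.nd a (htS ha) b (htS hb) hab
        cases b1 with
        | true =>
          obtain ⟨a, hat, hamono⟩ := enum_one t n (by omega)
          refine target_clique (f := fun i => y (a i)) ?_
          intro i j hij
          rcases lt_or_gt_of_ne hij with h | h
          · exact of_decide_eq_true (h1 _ (hat i) _ (hat j) (hamono h))
          · exact (of_decide_eq_true (h1 _ (hat j) _ (hat i) (hamono h))).symm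
        | false =>
        have hyy : ∀ a ∈ t, ∀ b ∈ t, a ≠ b → ¬ G.Adj (y a) (y b) := by
          intro a ha b hb hab
          rcases lt_or_gt_of_ne hab with h | h
          · exact of_decide_eq_false (h1 _ ha _ hb h)
          · intro hadj
            exact of_decide_eq_false (h1 _ hb _ ha h) hadj.symm
        have hyinj : ∀ (a : Fin n → ℕ), StrictMono a → (∀ i, a i ∈ t) →
            Function.Injective (fun i => y (a i)) := by
          intro a hm hmem i j he
          by_contra hij
          exact hij (hm.injective (hyinJ _ (htJ (hmem i)) _ (htJ (hmem j)) he))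
        cases b2 with
        | true =>
          obtain ⟨a, b, hat, hbt, hab, hamono, hbmono⟩ := enum_pair t n (by omega)
          refine target_biclique (f := fun i => y (a i)) (g := fun j => (E (b j)).1)
            (hyinj a hamono hat) ?_ ?_ ?_ ?_ ?_
          · intro i j hij
            by_contra hne
            exact (hnd _ (hbt i) _ (hbt j) (fun he => hne (hbmono.injective he))).1 hij
          · intro i j
            exact hne1 _ (htB (hat i)) _ (htB (hbt j))
          · intro i j
            exact of_decide_eq_true (h2 _ (hat i) _ (hbt j) (hab i j))
          · intro i j hij
            exact hyy _ (hat i) _ (hat j) (fun he => hij (hamono.injective he))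
          · intro i j hij
            exact (himf.2 _ (htS (hbt i)) _ (htS (hbt j))
              (fun he => hij (hbmono.injective he))).1
        | false =>
        cases b3 with
        | true =>
          obtain ⟨a, b, hat, hbt, hab, hamono, hbmono⟩ := enum_pair t n (by omega)
          refine target_biclique (f := fun i => (E (a i)).1) (g := fun j => y (b j))
            ?_ (hyinj b hbmono hbt) ?_ ?_ ?_ ?_
          · intro i j hij
            by_contra hne
            exact (hnd _ (hat i) _ (hat j) (fun he => hne (hamono.injective he))).1 hij
          · intro i j
            exact fun he => hne1 _ (htB (hbt j)) _ (htB (hat i)) he.symm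
          · intro i j
            exact of_decide_eq_true (h3 _ (hat i) _ (hbt j) (hab i j))
          · intro i j hij
            exact (himf.2 _ (htS (hat i)) _ (htS (hat j))
              (fun he => hij (hamono.injective he))).1
          · intro i j hij
            exact hyy _ (hbt i) _ (hbt j) (fun he => hij (hbmono.injective he))
        | false =>
        cases b4 with
        | true =>
          obtain ⟨a, b, hat, hbt, hab, hamono, hbmono⟩ := enum_pair t n (by omega)
          refine target_biclique (f := fun i => y (a i)) (g := fun j => (E (b j)).2)
            (hyinj a hamono hat) ?_ ?_ ?_ ?_ ?_
          · intro i j hij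
            by_contra hne
            exact (hnd _ (hbt i) _ (hbt j) (fun he => hne (hbmono.injective he))).2.2.2 hij
          · intro i j
            exact hne2 _ (htB (hat i)) _ (htB (hbt j))
          · intro i j
            exact of_decide_eq_true (h4 _ (hat i) _ (hbt j) (hab i j))
          · intro i j hij
            exact hyy _ (hat i) _ (hat j) (fun he => hij (hamono.injective he))
          · intro i j hij
            exact (himf.2 _ (htS (hbt i)) _ (htS (hbt j))
              (fun he => hij (hbmono.injective he))).2.2.2
        | false =>
        cases b5 with
        | true =>
          obtain ⟨a, b, hat, hbt, hab, hamono, hbmono⟩ := enum_pair t n (by omega)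
          refine target_biclique (f := fun i => (E (a i)).2) (g := fun j => y (b j))
            ?_ (hyinj b hbmono hbt) ?_ ?_ ?_ ?_
          · intro i j hij
            by_contra hne
            exact (hnd _ (hat i) _ (hat j) (fun he => hne (hamono.injective he))).2.2.2 hij
          · intro i j
            exact fun he => hne2 _ (htB (hbt j)) _ (htB (hat i)) he.symm
          · intro i j
            exact of_decide_eq_true (h5 _ (hat i) _ (hbt j) (hab i j))
          · intro i j hij
            exact (himf.2 _ (htS (hat i)) _ (htS (hat j))
              (fun he => hij (hamono.injective he))).2.2.2
          · intro i j hij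
            exact hyy _ (hbt i) _ (hbt j) (fun he => hij (hbmono.injective he))
        | false =>
        -- all bits false: recurse with edges (y i, (E i).1)
        have hyE1 : ∀ a ∈ t, ∀ b ∈ t, a ≠ b → ¬ G.Adj (y a) (E b).1 := by
          intro a ha b hb hab
          rcases lt_or_gt_of_ne hab with h | h
          · exact of_decide_eq_false (h2 _ ha _ hb h)
          · intro hadj
            exact of_decide_eq_false (h3 _ hb _ ha h) hadj.symm
        set E'' : ℕ → V × V := fun i => (y i, (E i).1) with hE''
        have himf'' : IMF G E'' t := by
          constructor
          · intro i hi
            exact hyadj i (htB hi)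
          · intro i hi j hj hij
            refine ⟨hyy _ hi _ hj hij, hyE1 _ hi _ hj hij, ?_, ?_⟩
            · intro hadj
              exact hyE1 _ hj _ hi (Ne.symm hij) hadj.symm
            · exact (himf.2 _ (htS hi) _ (htS hj) hij).1
        refine hmd V G x E'' t himf'' ?_ (by omega)
        intro i hi
        exact hyshort i (htB hi)
end MainRec

section Top

lemma matching_disj {V : Type} {G : SimpleGraph V} {M : G.Subgraph} (hM : M.IsMatching)
    {a b c d : V} (hab : M.Adj a b) (hcd : M.Adj c d) (hne : s(a, b) ≠ s(c, d)) :
    a ≠ c ∧ a ≠ d ∧ b ≠ c ∧ b ≠ d := by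
  have huniq : ∀ u w1 w2, M.Adj u w1 → M.Adj u w2 → w1 = w2 := fun u w1 w2 h1 h2 =>
    (hM (M.edge_vert h1)).unique h1 h2
  refine ⟨?_, ?_, ?_, ?_⟩
  · rintro rfl
    exact hne (by rw [huniq a b d hab hcd])
  · rintro rfl
    have hbc : b = c := huniq a b c hab hcd.symm
    exact hne (by rw [hbc, Sym2.eq_swap])
  · rintro rfl
    have had : a = d := huniq b a d hab.symm hcd
    exact hne (by rw [had, Sym2.eq_swap])
  · rintro rfl
    have hac : a = c := huniq b a c hab.symm hcd.symm
    exact hne (by rw [hac])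

lemma matching_family {V : Type} [Fintype V] {G : SimpleGraph V} {M : G.Subgraph}
    (hM : M.IsMatching) (N : ℕ) (hN : N ≤ M.edgeSet.ncard) (x0 : V) :
    ∃ E : ℕ → V × V, PWD G E (Finset.range N) := by
  classical
  have hfin : M.edgeSet.Finite := Set.toFinite _
  set F := hfin.toFinset with hF
  have hFc : N ≤ F.card := by
    rw [hF, ← Set.ncard_eq_toFinset_card _ hfin]
    exact hN
  have hpair : ∀ e : Sym2 V, e ∈ M.edgeSet → ∃ p : V × V, M.Adj p.1 p.2 ∧ e = s(p.1, p.2) := by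
    intro e
    refine Sym2.ind (fun a b hm => ⟨(a, b), SimpleGraph.Subgraph.mem_edgeSet.mp hm, rfl⟩) e
  choose pr hpr1 hpr2 using hpair
  have hmemF : ∀ (k : ℕ) (h : k < F.card), ((F.equivFin.symm ⟨k, h⟩ : F) : Sym2 V) ∈ M.edgeSet :=
    fun k h => hfin.mem_toFinset.mp (F.equivFin.symm ⟨k, h⟩).2
  set E : ℕ → V × V := fun k =>
    if h : k < F.card then pr _ (hmemF k h) else (x0, x0) with hE
  have hEeq : ∀ (k : ℕ) (h : k < F.card), E k = pr _ (hmemF k h) := by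
    intro k h
    simp only [hE, dif_pos h]
  have hadjM : ∀ k ∈ Finset.range N, M.Adj (E k).1 (E k).2 := by
    intro k hk
    have hklt : k < F.card := lt_of_lt_of_le (Finset.mem_range.mp hk) hFc
    rw [hEeq k hklt]
    exact hpr1 _ _
  have hedge : ∀ (k : ℕ) (h : k < F.card),
      ((F.equivFin.symm ⟨k, h⟩ : F) : Sym2 V) = s((E k).1, (E k).2) := by
    intro k h
    rw [hEeq k h]
    exact hpr2 _ _
  refine ⟨E, fun k hk => M.adj_sub (hadjM k hk), ?_⟩
  intro i hi j hj hij
  have hilt : i < F.card := lt_of_lt_of_le (Finset.mem_range.mp hi) hFc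
  have hjlt : j < F.card := lt_of_lt_of_le (Finset.mem_range.mp hj) hFc
  have hij' : s((E i).1, (E i).2) ≠ s((E j).1, (E j).2) := by
    rw [← hedge i hilt, ← hedge j hjlt]
    intro he
    have := F.equivFin.symm.injective (Subtype.ext he)
    simp only [Fin.mk.injEq] at this
    exact hij this
  exact matching_disj hM (hadjM i hi) (hadjM j hj) hij'


theorem stmt5 (n : ℕ) (hn : 1 ≤ n) :
    ∃ N : ℕ, ∀ (V : Type) (_ : Fintype V) (G : SimpleGraph V),
      G.Connected →
      (∃ M : G.Subgraph, M.IsMatching ∧ N ≤ M.edgeSet.ncard) →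
        HasInducedCopy G (SimpleGraph.pathGraph n) ∨
        HasInducedCopy G (⊤ : SimpleGraph (Fin n)) ∨
        HasInducedCopy G (completeBipartiteGraph (Fin n) (Fin n)) ∨
        HasInducedCopy G (Sgraph2 n) ∨
        HasInducedCopy G (Fgraph n) := by
  classical
  obtain ⟨mfin, hmain⟩ := mainrec n n
  obtain ⟨N1, hph1⟩ := phase1 n mfin
  refine ⟨N1 + 1, ?_⟩
  intro V _ G hconn hmat
  obtain ⟨M, hM, hMN⟩ := hmat
  show Target G n
  by_cases hp : HasInducedCopy G (SimpleGraph.pathGraph n)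
  · exact Or.inl hp
  obtain ⟨x0⟩ : Nonempty V := hconn.nonempty
  have hshort : ∀ u v : V, ∃ w : G.Walk u v, w.length ≤ n := by
    intro u v
    rcases short_or_path n (hconn.preconnected u v) with ⟨w, hw⟩ | hcopy
    · exact ⟨w, by omega⟩
    · exact absurd hcopy hp
  obtain ⟨E, hpwd⟩ := matching_family hM (N1 + 1) hMN x0
  rcases hph1 V G E (Finset.range (N1 + 1)) hpwd (by simp) with htarget | ⟨t, hts, htc, himf⟩
  · exact htarget
  · refine hmain V G x0 E t himf ?_ htc
    intro i _
    exact hshort x0 (E i).1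
end Top
end

section
/- Every finite simple graph G satisfies α'(G) ≤ α'_f(G) ≤ (3/2)·α'(G), where α'(G) is the matching number and α'_f(G) is the fractional matching number. -/
open SimpleGraph Finset

/-- The fractional matching number of `G`. -/
noncomputable def fracMatchNum {V : Type*} [Fintype V] [DecidableEq V]
    (G : SimpleGraph V) [DecidableRel G.Adj] : ℝ :=
  sSup {x : ℝ | ∃ φ : Sym2 V → ℝ, (∀ e, 0 ≤ φ e ∧ φ e ≤ 1) ∧
    (∀ v : V, ∑ e ∈ G.edgeFinset.filter (fun e => v ∈ e), φ e ≤ 1) ∧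
    x = ∑ e ∈ G.edgeFinset, φ e}

section MyAux

variable {V : Type*} [Fintype V] [DecidableEq V] (G : SimpleGraph V) [DecidableRel G.Adj]

/-- A matching as a finset of pairwise vertex-disjoint edges. -/
def FM (G : SimpleGraph V) (F : Finset (Sym2 V)) : Prop :=
  ↑F ⊆ G.edgeSet ∧ ∀ e ∈ F, ∀ f ∈ F, e ≠ f → ∀ v : V, v ∈ e → v ∉ f

variable {G}

def FMsub (F : Finset (Sym2 V)) (h : ↑F ⊆ G.edgeSet) : G.Subgraph where
  verts := {v | ∃ e ∈ F, v ∈ e}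
  Adj a b := s(a,b) ∈ F
  adj_sub := fun hab => (G.mem_edgeSet).mp (h hab)
  edge_vert := fun {a b} hab => ⟨s(a,b), hab, Sym2.mem_mk_left a b⟩
  symm := ⟨fun a b hab => by show s(b,a) ∈ F; rwa [Sym2.eq_swap]⟩

lemma FMsub_edgeSet (F : Finset (Sym2 V)) (h : ↑F ⊆ G.edgeSet) :
    (FMsub F h).edgeSet = ↑F := by
  ext e
  induction e with
  | _ a b => exact SimpleGraph.Subgraph.mem_edgeSet

lemma FM.isMatching {F : Finset (Sym2 V)} (hF : FM G F) :
    (FMsub F hF.1).IsMatching := by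
  rintro v ⟨e, heF, hve⟩
  obtain ⟨w, rfl⟩ := Sym2.mem_iff_exists.mp hve
  refine ⟨w, heF, ?_⟩
  intro y hy
  by_contra hne
  have hne' : s(v,y) ≠ s(v,w) := by
    intro hcon
    exact hne (Sym2.congr_right.mp hcon)
  exact hF.2 _ hy _ heF hne' v (Sym2.mem_mk_left v y) (Sym2.mem_mk_left v w)

lemma FM.card_le_matchNum {F : Finset (Sym2 V)} (hF : FM G F) :
    F.card ≤ matchNum G := by
  have hbdd : BddAbove {k | ∃ M : G.Subgraph, M.IsMatching ∧ M.edgeSet.ncard = k} := by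
    refine ⟨Fintype.card (Sym2 V), ?_⟩
    rintro k ⟨M, _, rfl⟩
    calc M.edgeSet.ncard ≤ (Set.univ : Set (Sym2 V)).ncard :=
          Set.ncard_le_ncard (Set.subset_univ M.edgeSet) Set.finite_univ
      _ = Fintype.card (Sym2 V) := by rw [Set.ncard_univ, Nat.card_eq_fintype_card]
  apply le_csSup hbdd
  exact ⟨FMsub F hF.1, hF.isMatching, by rw [FMsub_edgeSet]; exact Set.ncard_coe_finset F⟩

lemma exists_max_FM (G : SimpleGraph V) [DecidableRel G.Adj] :
    ∃ F : Finset (Sym2 V), FM G F ∧ F.card = matchNum G := by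
  have hne : ({k | ∃ M : G.Subgraph, M.IsMatching ∧ M.edgeSet.ncard = k}).Nonempty := by
    refine ⟨0, ⊥, ?_, ?_⟩
    · rintro v ⟨⟩
    · simp [SimpleGraph.Subgraph.edgeSet_bot]
  have hbdd : BddAbove {k | ∃ M : G.Subgraph, M.IsMatching ∧ M.edgeSet.ncard = k} := by
    refine ⟨Fintype.card (Sym2 V), ?_⟩
    rintro k ⟨M, _, rfl⟩
    calc M.edgeSet.ncard ≤ (Set.univ : Set (Sym2 V)).ncard :=
          Set.ncard_le_ncard (Set.subset_univ M.edgeSet) Set.finite_univ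
      _ = Fintype.card (Sym2 V) := by rw [Set.ncard_univ, Nat.card_eq_fintype_card]
  obtain ⟨M, hM, hcard⟩ := Nat.sSup_mem hne hbdd
  have hfin : M.edgeSet.Finite := M.edgeSet.toFinite
  refine ⟨hfin.toFinset, ⟨?_, ?_⟩, ?_⟩
  · rw [Set.Finite.coe_toFinset]; exact M.edgeSet_subset
  · intro e he f hf hef v hve hvf
    rw [Set.Finite.mem_toFinset] at he hf
    obtain ⟨a, rfl⟩ := Sym2.mem_iff_exists.mp hve
    obtain ⟨b, rfl⟩ := Sym2.mem_iff_exists.mp hvf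
    have ha : M.Adj v a := he
    have hb : M.Adj v b := hf
    obtain ⟨w, -, huniq⟩ := hM (M.edge_vert ha)
    exact hef (by rw [huniq a ha, huniq b hb])
  · rw [show matchNum G = sSup {k | ∃ M : G.Subgraph, M.IsMatching ∧ M.edgeSet.ncard = k} from rfl,
      ← hcard]
    exact (Set.ncard_eq_toFinset_card _ hfin).symm


section Core
variable {V : Type*} [Fintype V] [DecidableEq V] {G : SimpleGraph V} [DecidableRel G.Adj]

variable {V : Type*} [Fintype V] [DecidableEq V] {G : SimpleGraph V} [DecidableRel G.Adj]


-- vertices covered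
lemma filter_mem_sym2 {a b : V} (hab : a ≠ b) :
    (univ.filter (fun v => v ∈ s(a,b))) = {a, b} := by
  ext v; simp [Sym2.mem_iff]

lemma card_filter_mem_sym2 {a b : V} (hab : a ≠ b) :
    (univ.filter (fun v => v ∈ s(a,b))).card = 2 := by
  rw [filter_mem_sym2 hab, card_insert_of_notMem (by simpa using hab), card_singleton]

lemma S_card (F : Finset (Sym2 V)) (hF : FM G F) :
    (univ.filter (fun v => ∃ e ∈ F, v ∈ e)).card = 2 * F.card := by
  have : (univ.filter (fun v => ∃ e ∈ F, v ∈ e)) =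
      F.biUnion (fun e => univ.filter (fun v => v ∈ e)) := by
    ext v; simp
  rw [this, card_biUnion, mul_comm]
  · rw [← smul_eq_mul, ← sum_const]
    apply sum_congr rfl
    intro e he
    induction e with
    | _ a b =>
      exact card_filter_mem_sym2 (G.ne_of_adj (hF.1 he))
  · intro e he f hf hef
    simp only [Finset.disjoint_left, mem_filter]
    rintro v ⟨-, hve⟩ ⟨-, hvf⟩
    exact hF.2 e he f hf hef v hve hvf


lemma upper_bound (F : Finset (Sym2 V)) (hF : FM G F)
    (hmax : ∀ F' : Finset (Sym2 V), FM G F' → F'.card ≤ F.card)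
    (φ : Sym2 V → ℝ) (hφ0 : ∀ e, 0 ≤ φ e)
    (hload : ∀ v : V, ∑ e ∈ G.edgeFinset.filter (fun e => v ∈ e), φ e ≤ 1) :
    ∑ e ∈ G.edgeFinset, φ e ≤ (3/2) * F.card := by
  classical
  set S : Finset V := univ.filter (fun v => ∃ e ∈ F, v ∈ e) with hSdef
  have hSF : ∀ {v : V} {e : Sym2 V}, e ∈ F → v ∈ e → v ∈ S := by
    intro v e he hv; simp only [hSdef, mem_filter, mem_univ, true_and]; exact ⟨e, he, hv⟩
  have hedge : F ⊆ G.edgeFinset := fun e he => (G.mem_edgeFinset).mpr (hF.1 he)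
  -- every edge touches S
  have hcov : ∀ e ∈ G.edgeFinset, ∃ v ∈ S, v ∈ e := by
    intro e he
    by_contra hcon
    push_neg at hcon
    have heF : e ∉ F := by
      intro heF
      induction e with
      | _ a b => exact hcon a (hSF heF (Sym2.mem_mk_left a b)) (Sym2.mem_mk_left a b)
    have hFM' : FM G (insert e F) := by
      constructor
      · intro x hx
        rcases mem_insert.mp (Finset.mem_coe.mp hx) with rfl | hxf
        · exact (G.mem_edgeFinset).mp he
        · exact hF.1 hxf
      · intro e1 he1 e2 he2 hne v hv1 hv2
        rcases mem_insert.mp he1 with rfl | he1' <;> rcases mem_insert.mp he2 with rfl | he2'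
        · exact hne rfl
        · exact hcon v (hSF he2' hv2) hv1
        · exact hcon v (hSF he1' hv1) hv2
        · exact hF.2 e1 he1' e2 he2' hne v hv1 hv2
    have := hmax _ hFM'
    rw [card_insert_of_notMem heF] at this
    omega
  -- the augmenting-path lemma
  have haug : ∀ (a b u w : V), s(a,b) ∈ F → u ∉ S → w ∉ S → u ≠ w →
      s(a,u) ∈ G.edgeFinset → s(b,w) ∈ G.edgeFinset → False := by
    intro a b u w hm hu hw huw hau hbw
    have haS : a ∈ S := hSF hm (Sym2.mem_mk_left a b)
    have hbS : b ∈ S := hSF hm (Sym2.mem_mk_right a b)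
    have hab : a ≠ b := G.ne_of_adj ((G.mem_edgeFinset).mp (hedge hm))
    have hau' : a ≠ u := G.ne_of_adj ((G.mem_edgeFinset).mp hau)
    have hbw' : b ≠ w := G.ne_of_adj ((G.mem_edgeFinset).mp hbw)
    have haw : a ≠ w := fun h => hw (h ▸ haS)
    have hub : u ≠ b := fun h => hu (h ▸ hbS)
    -- helpers
    have d1 : ∀ v : V, v ∈ s(a,u) → v ∉ s(b,w) := by
      intro v hv1 hv2
      rcases Sym2.mem_iff.mp hv1 with rfl | rfl <;> rcases Sym2.mem_iff.mp hv2 with rfl | rfl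
      · exact hab rfl
      · exact haw rfl
      · exact hub rfl
      · exact huw rfl
    have d2 : ∀ f ∈ F.erase s(a,b), ∀ v : V, v ∈ s(a,u) → v ∉ f := by
      intro f hf v hv1 hv2
      rcases Sym2.mem_iff.mp hv1 with rfl | rfl
      · exact hF.2 _ hm _ (mem_of_mem_erase hf) (Ne.symm (ne_of_mem_erase hf)) v
          (Sym2.mem_iff.mpr (Or.inl rfl)) hv2
      · exact hu (hSF (mem_of_mem_erase hf) hv2)
    have d3 : ∀ f ∈ F.erase s(a,b), ∀ v : V, v ∈ s(b,w) → v ∉ f := by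
      intro f hf v hv1 hv2
      rcases Sym2.mem_iff.mp hv1 with rfl | rfl
      · exact hF.2 _ hm _ (mem_of_mem_erase hf) (Ne.symm (ne_of_mem_erase hf)) v
          (Sym2.mem_iff.mpr (Or.inr rfl)) hv2
      · exact hw (hSF (mem_of_mem_erase hf) hv2)
    set F' := insert s(a,u) (insert s(b,w) (F.erase s(a,b))) with hF'def
    have hFM' : FM G F' := by
      constructor
      · intro x hx
        rcases mem_insert.mp (Finset.mem_coe.mp hx) with rfl | hx'
        · exact (G.mem_edgeFinset).mp hau
        rcases mem_insert.mp hx' with rfl | hx'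
        · exact (G.mem_edgeFinset).mp hbw
        · exact hF.1 (mem_of_mem_erase hx')
      · intro e1 he1 e2 he2 hne v hv1 hv2
        have mem_cases : ∀ x ∈ F', x = s(a,u) ∨ x = s(b,w) ∨ x ∈ F.erase s(a,b) := by
          intro x hx
          rcases mem_insert.mp hx with h | hx'
          · exact Or.inl h
          rcases mem_insert.mp hx' with h | hx''
          · exact Or.inr (Or.inl h)
          · exact Or.inr (Or.inr hx'')
        rcases mem_cases _ he1 with rfl | rfl | he1' <;>
          rcases mem_cases _ he2 with rfl | rfl | he2'
        · exact hne rfl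
        · exact d1 v hv1 hv2
        · exact d2 _ he2' v hv1 hv2
        · exact d1 v hv2 hv1
        · exact hne rfl
        · exact d3 _ he2' v hv1 hv2
        · exact d2 _ he1' v hv2 hv1
        · exact d3 _ he1' v hv2 hv1
        · exact hF.2 _ (mem_of_mem_erase he1') _ (mem_of_mem_erase he2') hne v hv1 hv2
    have hne1 : s(b,w) ∉ F.erase s(a,b) := by
      intro h
      exact hw (hSF (mem_of_mem_erase h) (Sym2.mem_mk_right b w))
    have hne2 : s(a,u) ∉ insert s(b,w) (F.erase s(a,b)) := by
      intro h
      rcases mem_insert.mp h with h' | h'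
      · exact d1 a (Sym2.mem_mk_left a u) (h' ▸ Sym2.mem_mk_left a u)
      · exact hu (hSF (mem_of_mem_erase h') (Sym2.mem_mk_right a u))
    have hcard : F'.card = F.card + 1 := by
      rw [hF'def, card_insert_of_notMem hne2, card_insert_of_notMem hne1,
        card_erase_of_mem hm]
      have : 1 ≤ F.card := card_pos.mpr ⟨_, hm⟩
      omega
    have := hmax _ hFM'
    omega
  -- number of S-endpoints of an edge
  set n : Sym2 V → ℕ := fun e => (S.filter (fun v => v ∈ e)).card with hndef
  have hn1 : ∀ e ∈ G.edgeFinset, 1 ≤ n e := by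
    intro e he
    obtain ⟨v, hvS, hve⟩ := hcov e he
    exact card_pos.mpr ⟨v, mem_filter.mpr ⟨hvS, hve⟩⟩
  have hn2 : ∀ e ∈ G.edgeFinset, n e ≤ 2 := by
    intro e he
    induction e with
    | _ a b =>
      calc (S.filter (fun v => v ∈ s(a,b))).card
          ≤ (univ.filter (fun v => v ∈ s(a,b))).card :=
            card_le_card (filter_subset_filter _ (subset_univ S))
        _ = 2 := card_filter_mem_sym2 (G.ne_of_adj ((G.mem_edgeFinset).mp he))
  set E1 : Finset (Sym2 V) := G.edgeFinset.filter (fun e => n e = 1) with hE1def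
  -- structure of edges with exactly one S-endpoint touching a matching edge
  have huniqS : ∀ e ∈ E1, ∀ x y : V, x ∈ S → x ∈ e → y ∈ S → y ∈ e → x = y := by
    intro e he x y hxS hxe hyS hye
    have h1 : (S.filter (fun v => v ∈ e)).card = 1 := (mem_filter.mp he).2
    obtain ⟨z, hz⟩ := card_eq_one.mp h1
    have hx := mem_singleton.mp (hz ▸ mem_filter.mpr ⟨hxS, hxe⟩)
    have hy := mem_singleton.mp (hz ▸ mem_filter.mpr ⟨hyS, hye⟩)
    rw [hx, hy]
  -- fiber bound: for each matching edge m, the φ-mass of E1-edges touching m is ≤ 1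
  have hfiber : ∀ m ∈ F, ∑ e ∈ E1.filter (fun e => ∃ v, v ∈ e ∧ v ∈ m), φ e ≤ 1 := by
    intro m hm
    induction m with
    | _ a b =>
    have hab : a ≠ b := G.ne_of_adj ((G.mem_edgeFinset).mp (hedge hm))
    have haS : a ∈ S := hSF hm (Sym2.mem_mk_left a b)
    have hbS : b ∈ S := hSF hm (Sym2.mem_mk_right a b)
    set fib := E1.filter (fun e => ∃ v, v ∈ e ∧ v ∈ s(a,b)) with hfibdef
    have hfibE : fib ⊆ G.edgeFinset := (filter_subset _ _).trans (filter_subset _ _)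
    have hstruct : ∀ e ∈ fib, (∃ u, u ∉ S ∧ e = s(a,u)) ∨ (∃ u, u ∉ S ∧ e = s(b,u)) := by
      intro e he
      obtain ⟨heE1, v, hve, hvm⟩ := mem_filter.mp he
      have hvS : v ∈ S := by
        rcases Sym2.mem_iff.mp hvm with rfl | rfl
        exacts [haS, hbS]
      obtain ⟨u, rfl⟩ := Sym2.mem_iff_exists.mp hve
      have hvu : v ≠ u := G.ne_of_adj ((G.mem_edgeFinset).mp (hfibE he))
      have huS : u ∉ S := fun huS =>
        hvu (huniqS _ heE1 v u hvS (Sym2.mem_mk_left v u) huS (Sym2.mem_mk_right v u))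
      rcases Sym2.mem_iff.mp hvm with rfl | rfl
      · exact Or.inl ⟨u, huS, rfl⟩
      · exact Or.inr ⟨u, huS, rfl⟩
    -- find a common vertex z of all fiber edges, or reduce to a or b
    have hz : ∃ z : V, ∀ e ∈ fib, z ∈ e := by
      by_cases hA : ∀ e ∈ fib, a ∈ e
      · exact ⟨a, hA⟩
      by_cases hB : ∀ e ∈ fib, b ∈ e
      · exact ⟨b, hB⟩
      push_neg at hA hB
      obtain ⟨ea, hea, hea'⟩ := hA
      obtain ⟨eb, heb, heb'⟩ := hB
      -- ea must be of b-type, eb of a-type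
      obtain ⟨w, hwS, rfl⟩ : ∃ w, w ∉ S ∧ ea = s(b,w) := by
        rcases hstruct _ hea with ⟨u, hu, rfl⟩ | h
        · exact absurd (Sym2.mem_mk_left a u) hea'
        · exact h
      obtain ⟨u, huS, rfl⟩ : ∃ u, u ∉ S ∧ eb = s(a,u) := by
        rcases hstruct _ heb with h | ⟨u, hu, rfl⟩
        · exact h
        · exact absurd (Sym2.mem_mk_left b u) heb'
      have huw : u = w := by
        by_contra hne
        exact haug a b u w hm huS hwS hne (hfibE heb) (hfibE hea)
      subst huw
      refine ⟨u, fun e he => ?_⟩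
      rcases hstruct _ he with ⟨u', hu', rfl⟩ | ⟨w', hw', rfl⟩
      · have : u' = u := by
          by_contra hne
          exact haug a b u' u hm hu' huS hne (hfibE he) (hfibE hea)
        exact this ▸ Sym2.mem_mk_right a u'
      · have : u = w' := by
          by_contra hne
          exact haug a b u w' hm huS hw' hne (hfibE heb) (hfibE he)
        exact this ▸ Sym2.mem_mk_right b w'
    obtain ⟨z, hzall⟩ := hz
    calc ∑ e ∈ fib, φ e ≤ ∑ e ∈ G.edgeFinset.filter (fun e => z ∈ e), φ e := by
          apply sum_le_sum_of_subset_of_nonneg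
          · intro e he
            exact mem_filter.mpr ⟨hfibE he, hzall e he⟩
          · intro e _ _; exact hφ0 e
      _ ≤ 1 := hload z
  -- Σ over E1 of φ ≤ F.card
  have hE1sum : ∑ e ∈ E1, φ e ≤ (F.card : ℝ) := by
    have hsub : E1 ⊆ F.biUnion (fun m => E1.filter (fun e => ∃ v, v ∈ e ∧ v ∈ m)) := by
      intro e he
      obtain ⟨v, hvS, hve⟩ := hcov e (mem_of_mem_filter e he)
      obtain ⟨m, hmF, hvm⟩ := by
        simpa only [hSdef, mem_filter, mem_univ, true_and] using hvS
      exact mem_biUnion.mpr ⟨m, hmF, mem_filter.mpr ⟨he, v, hve, hvm⟩⟩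
    have hdisj : ∀ m1 ∈ (F : Set (Sym2 V)), ∀ m2 ∈ (F : Set (Sym2 V)), m1 ≠ m2 →
        Disjoint (E1.filter (fun e => ∃ v, v ∈ e ∧ v ∈ m1))
          (E1.filter (fun e => ∃ v, v ∈ e ∧ v ∈ m2)) := by
      intro m1 hm1 m2 hm2 hne
      rw [Finset.disjoint_left]
      rintro e he1 he2
      obtain ⟨heE1, v1, hv1e, hv1m⟩ := mem_filter.mp he1
      obtain ⟨-, v2, hv2e, hv2m⟩ := mem_filter.mp he2
      have hv1S : v1 ∈ S := hSF hm1 hv1m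
      have hv2S : v2 ∈ S := hSF hm2 hv2m
      have := huniqS _ heE1 v1 v2 hv1S hv1e hv2S hv2e
      subst this
      exact hF.2 _ hm1 _ hm2 hne v1 hv1m hv2m
    calc ∑ e ∈ E1, φ e
        ≤ ∑ e ∈ F.biUnion (fun m => E1.filter (fun e => ∃ v, v ∈ e ∧ v ∈ m)), φ e :=
          sum_le_sum_of_subset_of_nonneg hsub (fun e _ _ => hφ0 e)
      _ = ∑ m ∈ F, ∑ e ∈ E1.filter (fun e => ∃ v, v ∈ e ∧ v ∈ m), φ e :=
          sum_biUnion hdisj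
      _ ≤ ∑ m ∈ F, 1 := sum_le_sum (fun m hm => hfiber m hm)
      _ = (F.card : ℝ) := by simp
  -- weighted degree sum bound
  have hwsum : ∑ e ∈ G.edgeFinset, (n e : ℝ) * φ e ≤ 2 * F.card := by
    have step1 : ∑ e ∈ G.edgeFinset, (n e : ℝ) * φ e
        = ∑ v ∈ S, ∑ e ∈ G.edgeFinset.filter (fun e => v ∈ e), φ e := by
      have key : ∀ e ∈ G.edgeFinset, (n e : ℝ) * φ e = ∑ v ∈ S, if v ∈ e then φ e else 0 := by
        intro e he
        rw [← sum_filter, sum_const, nsmul_eq_mul]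
      rw [sum_congr rfl key, sum_comm]
      exact sum_congr rfl fun v _ => (sum_filter _ _).symm
    calc ∑ e ∈ G.edgeFinset, (n e : ℝ) * φ e
        = ∑ v ∈ S, ∑ e ∈ G.edgeFinset.filter (fun e => v ∈ e), φ e := step1
      _ ≤ ∑ v ∈ S, 1 := sum_le_sum (fun v _ => hload v)
      _ = (S.card : ℝ) := by simp
      _ = 2 * F.card := by rw [S_card F hF]; push_cast; ring
  -- final assembly
  have hsplit : ∑ e ∈ G.edgeFinset, φ e
      = ∑ e ∈ E1, φ e + ∑ e ∈ G.edgeFinset.filter (fun e => ¬ n e = 1), φ e :=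
    (sum_filter_add_sum_filter_not _ _ _).symm
  have hsplitn : ∑ e ∈ G.edgeFinset, (n e : ℝ) * φ e
      = ∑ e ∈ E1, (n e : ℝ) * φ e
        + ∑ e ∈ G.edgeFinset.filter (fun e => ¬ n e = 1), (n e : ℝ) * φ e :=
    (sum_filter_add_sum_filter_not _ _ _).symm
  have h1 : ∑ e ∈ E1, (n e : ℝ) * φ e = ∑ e ∈ E1, φ e := by
    refine sum_congr rfl fun e he => ?_
    rw [(mem_filter.mp he).2]
    norm_num
  have h2 : ∑ e ∈ G.edgeFinset.filter (fun e => ¬ n e = 1), (n e : ℝ) * φ e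
      = 2 * ∑ e ∈ G.edgeFinset.filter (fun e => ¬ n e = 1), φ e := by
    rw [mul_sum]
    refine sum_congr rfl fun e he => ?_
    obtain ⟨heE, hne1⟩ := mem_filter.mp he
    have : n e = 2 := by
      have := hn1 e heE
      have := hn2 e heE
      omega
    rw [this]
    norm_num
  have h2nn : (0:ℝ) ≤ ∑ e ∈ G.edgeFinset.filter (fun e => ¬ n e = 1), φ e :=
    sum_nonneg fun e _ => hφ0 e
  rw [hsplitn, h1, h2] at hwsum
  rw [hsplit]
  linarith


end Core
end MyAux

theorem stmt8 {V : Type*} [Fintype V] [DecidableEq V]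
    (G : SimpleGraph V) [DecidableRel G.Adj] :
    (matchNum G : ℝ) ≤ fracMatchNum G ∧ fracMatchNum G ≤ (3 / 2) * matchNum G := by
  classical
  obtain ⟨F, hF, hFcard⟩ := exists_max_FM G
  have hmax : ∀ F' : Finset (Sym2 V), FM G F' → F'.card ≤ F.card :=
    fun F' h => hFcard ▸ h.card_le_matchNum
  have hedge : F ⊆ G.edgeFinset := fun e he => (G.mem_edgeFinset).mpr (hF.1 he)
  have hAnon : ({x : ℝ | ∃ φ : Sym2 V → ℝ, (∀ e, 0 ≤ φ e ∧ φ e ≤ 1) ∧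
      (∀ v : V, ∑ e ∈ G.edgeFinset.filter (fun e => v ∈ e), φ e ≤ 1) ∧
      x = ∑ e ∈ G.edgeFinset, φ e}).Nonempty := by
    refine ⟨0, fun _ => 0, fun e => by norm_num, fun v => by simp, by simp⟩
  have hAbd : BddAbove {x : ℝ | ∃ φ : Sym2 V → ℝ, (∀ e, 0 ≤ φ e ∧ φ e ≤ 1) ∧
      (∀ v : V, ∑ e ∈ G.edgeFinset.filter (fun e => v ∈ e), φ e ≤ 1) ∧
      x = ∑ e ∈ G.edgeFinset, φ e} := by
    refine ⟨(G.edgeFinset.card : ℝ), ?_⟩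
    rintro x ⟨φ, hφ, hl, rfl⟩
    calc ∑ e ∈ G.edgeFinset, φ e ≤ ∑ e ∈ G.edgeFinset, 1 :=
          Finset.sum_le_sum (fun e _ => (hφ e).2)
      _ = (G.edgeFinset.card : ℝ) := by simp
  constructor
  · rw [← hFcard, fracMatchNum]
    apply le_csSup hAbd
    refine ⟨fun e => if e ∈ F then 1 else 0, fun e => by dsimp only; split <;> norm_num, ?_, ?_⟩
    · intro v
      rw [Finset.sum_boole]
      have : (((G.edgeFinset.filter (fun e => v ∈ e)).filter (fun e => e ∈ F)).card : ℝ) ≤ 1 := by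
        have hle : ((G.edgeFinset.filter (fun e => v ∈ e)).filter (fun e => e ∈ F)).card ≤ 1 := by
          apply Finset.card_le_one.mpr
          intro e he f hf
          obtain ⟨he', heF⟩ := Finset.mem_filter.mp he
          obtain ⟨hf', hfF⟩ := Finset.mem_filter.mp hf
          by_contra hne
          exact hF.2 e heF f hfF hne v (Finset.mem_filter.mp he').2 (Finset.mem_filter.mp hf').2
        exact_mod_cast hle
      exact this
    · rw [Finset.sum_boole]
      congr 1
      rw [Finset.filter_mem_eq_inter, Finset.inter_eq_right.mpr hedge]
  · rw [fracMatchNum]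
    apply csSup_le hAnon
    rintro x ⟨φ, hφ, hl, rfl⟩
    have := upper_bound F hF hmax φ (fun e => (hφ e).1) hl
    rw [hFcard] at this
    exact this
end

section
/- Let G be a graph with an independent set U, and let G have the property that every vertex not in U is a cut-vertex of G. If G contains an induced complete subgraph K on n vertices disjoint from U with n ≥ 2, then G contains H_n^1 as an induced subgraph. -/
open SimpleGraph Finset

section Aux

/-- Reachability in `G` minus the vertex `v`. -/
def ReachAvoid {V : Type*} (G : SimpleGraph V) (v a b : V) : Prop :=
  ∃ (ha : a ∈ ({v}ᶜ : Set V)) (hb : b ∈ ({v}ᶜ : Set V)),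
    (G.induce {v}ᶜ).Reachable ⟨a, ha⟩ ⟨b, hb⟩

lemma ReachAvoid.refl {V : Type*} (G : SimpleGraph V) {v a : V} (h : a ≠ v) :
    ReachAvoid G v a a := ⟨h, h, Reachable.refl _⟩

lemma ReachAvoid.symm {V : Type*} {G : SimpleGraph V} {v a b : V}
    (h : ReachAvoid G v a b) : ReachAvoid G v b a := by
  obtain ⟨ha, hb, r⟩ := h; exact ⟨hb, ha, r.symm⟩

lemma ReachAvoid.trans {V : Type*} {G : SimpleGraph V} {v a b c : V}
    (h : ReachAvoid G v a b) (h' : ReachAvoid G v b c) : ReachAvoid G v a c := by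
  obtain ⟨ha, hb, r⟩ := h; obtain ⟨hb', hc, r'⟩ := h'
  exact ⟨ha, hc, r.trans r'⟩

lemma ReachAvoid.of_adj {V : Type*} {G : SimpleGraph V} {v a b : V}
    (h : G.Adj a b) (ha : a ≠ v) (hb : b ≠ v) : ReachAvoid G v a b :=
  ⟨ha, hb, Adj.reachable (by simpa [SimpleGraph.comap_adj] using h)⟩

lemma reachAvoid_of_walk {V : Type*} {G : SimpleGraph V} (v : V) {a b : V}
    (p : G.Walk a b) (hp : v ∉ p.support) : ReachAvoid G v a b := by
  induction p with
  | nil => exact ReachAvoid.refl G (by simp at hp; exact fun h => hp h.symm)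
  | @cons x y z h q ih =>
      rw [SimpleGraph.Walk.support_cons] at hp
      simp only [List.mem_cons, not_or] at hp
      exact (ReachAvoid.of_adj h (fun hh => hp.1 hh.symm)
        (fun hh => hp.2 (hh ▸ q.start_mem_support))).trans (ih hp.2)

lemma card_cc_one {V : Type*} (G : SimpleGraph V) (hG : G.Connected) :
    Nat.card G.ConnectedComponent = 1 := by
  obtain ⟨x0⟩ := hG.nonempty
  rw [Nat.card_eq_one_iff_exists]
  refine ⟨G.connectedComponentMk x0, ?_⟩
  refine SimpleGraph.ConnectedComponent.ind (fun y => ?_)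
  exact SimpleGraph.ConnectedComponent.sound (hG.preconnected y x0)

lemma pendant_of_walk {V : Type*} [DecidableEq V] {G : SimpleGraph V} {v y : V} (q : G.Walk v y)
    (hy : y ≠ v) (hc : List.count v q.support = 1) :
    ∃ u, G.Adj v u ∧ ReachAvoid G v u y := by
  cases q with
  | nil => exact absurd rfl hy
  | @cons _ u _ h q' =>
      rw [SimpleGraph.Walk.support_cons, List.count_cons_self] at hc
      have hnot : v ∉ q'.support := by
        intro hmem
        have := List.count_pos_iff.mpr hmem -- may need name fix
        omega
      exact ⟨u, h, reachAvoid_of_walk v q' hnot⟩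

lemma exists_pendant {V : Type*} [Fintype V] (G : SimpleGraph V) (hG : G.Connected)
    {v : V} (hv : IsCutVertex G v) {w0 : V} (hw0 : w0 ≠ v) :
    ∃ u, G.Adj v u ∧ ¬ ReachAvoid G v u w0 := by
  classical
  have h1 : 1 < Nat.card (G.induce {v}ᶜ).ConnectedComponent := by
    rw [← card_cc_one G hG]; exact hv
  have : Nontrivial (G.induce {v}ᶜ).ConnectedComponent :=
    Finite.one_lt_card_iff_nontrivial.mp h1
  obtain ⟨c, hc⟩ := exists_ne ((G.induce {v}ᶜ).connectedComponentMk ⟨w0, hw0⟩)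
  obtain ⟨x, hx⟩ := c.exists_rep
  have hxw : ¬ ReachAvoid G v x.1 w0 := by
    rintro ⟨ha, hb, r⟩
    exact hc (hx ▸ SimpleGraph.ConnectedComponent.sound (by
      convert r using 2))
  obtain ⟨p⟩ := hG.preconnected w0 x.1
  have hvp : v ∈ p.support := by
    by_contra h
    exact hxw ((reachAvoid_of_walk v p h).symm)
  have hvp' : v ∈ p.reverse.support := by rwa [SimpleGraph.Walk.support_reverse, List.mem_reverse]
  set q : G.Walk v x.1 := (p.reverse.takeUntil v hvp').reverse with hq
  have hcount : List.count v q.support = 1 := by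
    rw [hq, SimpleGraph.Walk.support_reverse, List.count_reverse]
    exact SimpleGraph.Walk.count_support_takeUntil_eq_one _ hvp'
  have hxv : x.1 ≠ v := Set.mem_compl_singleton_iff.mp x.2
  obtain ⟨u, hu, hru⟩ := pendant_of_walk q hxv hcount
  exact ⟨u, hu, fun hr => hxw (hru.symm.trans hr)⟩


end Aux

theorem stmt14 {V : Type*} [Fintype V] (G : SimpleGraph V) (hG : G.Connected)
    (U : Set V) (hU : _root_.IsIndepSet G U)
    (hcut : ∀ v, v ∉ U → IsCutVertex G v)
    (n : ℕ) (hn : 2 ≤ n) (s : Finset V) (hclique : G.IsNClique n s)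
    (hdisj : ∀ v ∈ s, v ∉ U) :
    HasInducedCopy G (Hgraph1 n) := by
  classical
  have hcard : s.card = n := hclique.2
  have hclq : ∀ v ∈ s, ∀ w ∈ s, v ≠ w → G.Adj v w := fun v hv w hw hne =>
    hclique.1 hv hw hne
  have key : ∀ v : V, ∃ u, v ∈ s → G.Adj v u ∧ ∀ w ∈ s, w ≠ v → ¬ ReachAvoid G v u w := by
    intro v
    by_cases hv : v ∈ s
    · obtain ⟨w0, hw0s, hw0v⟩ := Finset.exists_mem_ne (by omega : 1 < s.card) v
      obtain ⟨u, hu, hur⟩ := exists_pendant G hG (hcut v (hdisj v hv)) hw0v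
      refine ⟨u, fun _ => ⟨hu, fun w hw hwv hr => ?_⟩⟩
      rcases eq_or_ne w w0 with rfl | hne
      · exact hur hr
      · exact hur (hr.trans (ReachAvoid.of_adj (hclq w hw w0 hw0s hne) hwv hw0v))
    · exact ⟨v, fun h => absurd h hv⟩
  choose u hu using key
  have hadj : ∀ v ∈ s, G.Adj v (u v) := fun v hv => (hu v hv).1
  have hnr : ∀ v ∈ s, ∀ w ∈ s, w ≠ v → ¬ ReachAvoid G v (u v) w := fun v hv => (hu v hv).2
  have hune : ∀ v ∈ s, u v ≠ v := fun v hv => (hadj v hv).ne'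
  have hus : ∀ v ∈ s, u v ∉ s := by
    intro v hv hmem
    exact hnr v hv (u v) hmem (hune v hv) (ReachAvoid.refl G (hune v hv))
  have hnadj : ∀ v ∈ s, ∀ w ∈ s, w ≠ v → ¬ G.Adj w (u v) := by
    intro v hv w hw hwv hA
    exact hnr v hv w hw hwv ((ReachAvoid.of_adj hA hwv (hune v hv)).symm)
  have huinj : ∀ v ∈ s, ∀ w ∈ s, u v = u w → v = w := by
    intro v hv w hw he
    by_contra hne
    exact hnadj v hv w hw (Ne.symm hne) (he ▸ hadj w hw)
  have hnadj2 : ∀ v ∈ s, ∀ w ∈ s, v ≠ w → ¬ G.Adj (u v) (u w) := by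
    intro v hv w hw hvw hA
    have h1 : u v ≠ w := fun h => hus v hv (h ▸ hw)
    have h2 : ReachAvoid G w (u w) (u v) :=
      (ReachAvoid.of_adj hA h1 (hune w hw)).symm
    have h3 : ReachAvoid G w (u v) v := ReachAvoid.of_adj (hadj v hv).symm h1 hvw
    exact hnr w hw v hv hvw (h2.trans h3)
  -- enumeration of the clique
  set e : Fin n → V := fun i => (s.equivFin.symm (Fin.cast hcard.symm i)).1 with he
  have hes : ∀ i, e i ∈ s := fun i => (s.equivFin.symm (Fin.cast hcard.symm i)).2
  have heinj : Function.Injective e := by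
    intro i j h
    have := s.equivFin.symm.injective (Subtype.val_injective h)
    simpa [Fin.ext_iff] using this
  set f : Fin n ⊕ Fin n → V := Sum.elim e (fun i => u (e i)) with hfdef
  have hfinj : Function.Injective f := by
    rintro (i | i) (j | j) h <;>
      simp only [hfdef, Sum.elim_inl, Sum.elim_inr] at h
    · exact congrArg Sum.inl (heinj h)
    · exact absurd (h ▸ hes i) (hus (e j) (hes j))
    · exact absurd (h.symm ▸ hes j) (hus (e i) (hes i))
    · exact congrArg Sum.inr (heinj (huinj (e i) (hes i) (e j) (hes j) h))
  have hGadj : ∀ a b, G.Adj (f a) (f b) ↔ (Hgraph1 n).Adj a b := by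
    rintro (i | i) (j | j)
    · simp only [hfdef, Sum.elim_inl, Hgraph1, SimpleGraph.fromRel_adj]
      constructor
      · intro h
        exact ⟨by simpa using fun hij => (h.ne (congrArg e hij)).elim, Or.inl trivial⟩
      · rintro ⟨hne, -⟩
        exact hclq _ (hes i) _ (hes j) (fun h => hne (by simpa using heinj h))
    · simp only [hfdef, Sum.elim_inl, Sum.elim_inr, Hgraph1, SimpleGraph.fromRel_adj]
      constructor
      · intro h
        refine ⟨by simp, Or.inl ?_⟩
        by_contra hij
        exact hnadj (e j) (hes j) (e i) (hes i)
          (fun hh => hij (heinj hh)) h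
      · rintro ⟨-, hij | hij⟩
        · exact hij ▸ hadj (e i) (hes i)
        · exact absurd hij (by simp)
    · simp only [hfdef, Sum.elim_inl, Sum.elim_inr, Hgraph1, SimpleGraph.fromRel_adj]
      constructor
      · intro h
        refine ⟨by simp, Or.inr ?_⟩
        by_contra hij
        exact hnadj (e i) (hes i) (e j) (hes j)
          (fun hh => hij (heinj hh)) h.symm
      · rintro ⟨-, hij | hij⟩
        · exact absurd hij (by simp)
        · exact hij ▸ (hadj (e i) (hes i)).symm
    · simp only [hfdef, Sum.elim_inr, Hgraph1, SimpleGraph.fromRel_adj]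
      constructor
      · intro h
        rcases eq_or_ne i j with rfl | hij
        · exact absurd rfl h.ne
        · exact absurd h (hnadj2 (e i) (hes i) (e j) (hes j) (fun hh => hij (heinj hh)))
      · rintro ⟨-, h | h⟩ <;> exact h.elim
  refine ⟨Set.range f, ⟨⟨Equiv.ofInjective f hfinj, ?_⟩⟩⟩
  intro a b
  simp only [SimpleGraph.comap_adj, Equiv.ofInjective_apply]
  exact hGadj a b
end
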